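/- arXiv:0812.2156 — 3 statements merged into one kernel-verified Lean document; each statement's English description precedes it below -/
import Mathlib

section
/- Let L ∈ ZF^{n,m} with n ≥ 3 and m ≥ 3 be a zero-filiform Leibniz superalgebra of nilindex n+m with an adapted basis {x₁,…,x_n,y₁,…,y_m}. Then L³ equals the linear span of {x₂,…,x_n, y₃,…,y_m}; in particular y₂ ∉ L³. -/
/-- A complex Leibniz superalgebra: a ℤ₂-graded complex vector space `L = L₀ ⊕ L₁`
with a bilinear bracket satisfying `[L_α, L_β] ⊆ L_{α+β}` and the Leibniz
superidentity `[x,[y,z]] = [[x,y],z] − (−1)^{αβ}[[x,z],y]` for homogeneous `y, z`. -/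
structure LeibnizSuper (L : Type*) [AddCommGroup L] [Module ℂ L] where
  bracket : L →ₗ[ℂ] L →ₗ[ℂ] L
  L0 : Submodule ℂ L
  L1 : Submodule ℂ L
  compl : IsCompl L0 L1
  g00 : ∀ y ∈ L0, ∀ z ∈ L0, bracket y z ∈ L0
  g01 : ∀ y ∈ L0, ∀ z ∈ L1, bracket y z ∈ L1
  g10 : ∀ y ∈ L1, ∀ z ∈ L0, bracket y z ∈ L1
  g11 : ∀ y ∈ L1, ∀ z ∈ L1, bracket y z ∈ L0
  leib00 : ∀ x : L, ∀ y ∈ L0, ∀ z ∈ L0,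
    bracket x (bracket y z) = bracket (bracket x y) z - bracket (bracket x z) y
  leib01 : ∀ x : L, ∀ y ∈ L0, ∀ z ∈ L1,
    bracket x (bracket y z) = bracket (bracket x y) z - bracket (bracket x z) y
  leib10 : ∀ x : L, ∀ y ∈ L1, ∀ z ∈ L0,
    bracket x (bracket y z) = bracket (bracket x y) z - bracket (bracket x z) y
  leib11 : ∀ x : L, ∀ y ∈ L1, ∀ z ∈ L1,
    bracket x (bracket y z) = bracket (bracket x y) z + bracket (bracket x z) y

/-- `HasJordanType f ls` : the nilpotent endomorphism `f` has Jordan blocks of sizes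
given by the decreasing list `ls` (the number of blocks of size `≥ j+1` equals
`rank f^j − rank f^{j+1}`). -/
def HasJordanType {V : Type*} [AddCommGroup V] [Module ℂ V] (f : Module.End ℂ V)
    (ls : List ℕ) : Prop :=
  ls.Pairwise (· ≥ ·) ∧ (∀ a ∈ ls, 0 < a) ∧
  ∀ j : ℕ, ls.countP (fun a => decide (j + 1 ≤ a)) =
    Module.finrank ℂ (LinearMap.range (f ^ j)) -
      Module.finrank ℂ (LinearMap.range (f ^ (j + 1)))

namespace LeibnizSuper

variable {L : Type*} [AddCommGroup L] [Module ℂ L] (S : LeibnizSuper L)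

/-- The span of all brackets `[a,b]`, `a ∈ p`, `b ∈ q`. -/
def bracketSpan (p q : Submodule ℂ L) : Submodule ℂ L :=
  Submodule.span ℂ {z | ∃ a ∈ p, ∃ b ∈ q, z = S.bracket a b}

/-- Descending central series; `S.term k` is `L^{k+1}` (so `S.term 0 = L¹ = L`). -/
def term : ℕ → Submodule ℂ L
  | 0 => ⊤
  | k + 1 => S.bracketSpan (term k) ⊤

/-- `S.HasNilindex s` : `s` is the minimal natural number with `L^s = 0`. -/
def HasNilindex (s : ℕ) : Prop :=
  0 < s ∧ S.term (s - 1) = ⊥ ∧ ∀ t : ℕ, t + 1 < s → S.term t ≠ ⊥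

/-- The superalgebra is nilpotent. -/
def IsNilpotentSuper : Prop := ∃ s, S.term s = ⊥

/-- Right multiplication operator `R_x z = [z, x]`. -/
def R (x : L) : Module.End ℂ L := S.bracket.flip x

/-- Restriction of `R_x` (for `x ∈ L₀`) to the even part `L₀`. -/
def R0 (x : L) (hx : x ∈ S.L0) : Module.End ℂ S.L0 :=
  (S.R x).restrict (fun z hz => S.g00 z hz x hx)

/-- Restriction of `R_x` (for `x ∈ L₀`) to the odd part `L₁`. -/
def R1 (x : L) (hx : x ∈ S.L0) : Module.End ℂ S.L1 :=
  (S.R x).restrict (fun z hz => S.g10 z hz x hx)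

/-- `S.HasCharSeq ns ms` : the characteristic sequence of `S` is `(ns | ms)`, i.e.
`ns` (resp. `ms`) is the lexicographically maximal sequence of Jordan block sizes of
`R_x` restricted to `L₀` (resp. `L₁`) over all `x ∈ L₀ ∖ [L₀, L₀]`. -/
def HasCharSeq (ns ms : List ℕ) : Prop :=
  (∃ x, ∃ hx : x ∈ S.L0, x ∉ S.bracketSpan S.L0 S.L0 ∧ HasJordanType (S.R0 x hx) ns) ∧
  (∀ x, ∀ hx : x ∈ S.L0, x ∉ S.bracketSpan S.L0 S.L0 →
    ∀ ls, HasJordanType (S.R0 x hx) ls → ls = ns ∨ List.Lex (· < ·) ls ns) ∧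
  (∃ x, ∃ hx : x ∈ S.L0, x ∉ S.bracketSpan S.L0 S.L0 ∧ HasJordanType (S.R1 x hx) ms) ∧
  (∀ x, ∀ hx : x ∈ S.L0, x ∉ S.bracketSpan S.L0 S.L0 →
    ∀ ls, HasJordanType (S.R1 x hx) ls → ls = ms ∨ List.Lex (· < ·) ls ms)

/-- `S ∈ ZF^{n,m}` : `S` is zero-filiform with `dim L₀ = n`, `dim L₁ = m`. -/
def ZeroFiliform (n m : ℕ) : Prop :=
  Module.finrank ℂ S.L0 = n ∧ Module.finrank ℂ S.L1 = m ∧ S.HasCharSeq [n] [m]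

/-- A graded subalgebra: a submodule closed under the bracket which is the sum of
its intersections with the even and the odd parts. -/
def IsGradedSubalgebra (p : Submodule ℂ L) : Prop :=
  (∀ a ∈ p, ∀ b ∈ p, S.bracket a b ∈ p) ∧ p = p ⊓ S.L0 ⊔ p ⊓ S.L1

/-- `A` generates the superalgebra: the smallest graded subalgebra containing `A` is `L`. -/
def Generates (A : Set L) : Prop :=
  ∀ p : Submodule ℂ L, S.IsGradedSubalgebra p → A ⊆ p → p = ⊤

/-- An adapted basis `{x₁,…,x_n, y₁,…,y_m}` of a zero-filiform Leibniz superalgebra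
(1-based indexing). -/
def IsAdaptedPair (n m : ℕ) (x y : ℕ → L) : Prop :=
  (∀ i, 1 ≤ i → i ≤ n → x i ∈ S.L0) ∧
  (∀ j, 1 ≤ j → j ≤ m → y j ∈ S.L1) ∧
  LinearIndependent ℂ
    (Sum.elim (fun i : Fin n => x ((i : ℕ) + 1)) (fun j : Fin m => y ((j : ℕ) + 1))) ∧
  Submodule.span ℂ (Set.range
    (Sum.elim (fun i : Fin n => x ((i : ℕ) + 1)) (fun j : Fin m => y ((j : ℕ) + 1)))) = ⊤ ∧
  (∀ i, 1 ≤ i → i ≤ n - 1 → S.bracket (x i) (x 1) = x (i + 1)) ∧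
  S.bracket (x n) (x 1) = 0 ∧
  (∀ i k, 1 ≤ i → i ≤ n → 2 ≤ k → k ≤ n → S.bracket (x i) (x k) = 0) ∧
  (∀ j, 1 ≤ j → j ≤ m - 1 → S.bracket (y j) (x 1) = y (j + 1)) ∧
  S.bracket (y m) (x 1) = 0 ∧
  (∀ j k, 1 ≤ j → j ≤ m → 2 ≤ k → k ≤ n → S.bracket (y j) (x k) = 0)

end LeibnizSuper

namespace ZFAux

open LeibnizSuper Submodule

/-- Bundled context: a zero-filiform Leibniz superalgebra with adapted basis and
nilindex `n+m`, with all hypotheses unpacked. -/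
structure Ctx (L : Type*) [AddCommGroup L] [Module ℂ L] where
  S : LeibnizSuper L
  n : ℕ
  m : ℕ
  hn : 3 ≤ n
  hm : 3 ≤ m
  x : ℕ → L
  y : ℕ → L
  hx0 : ∀ i, 1 ≤ i → i ≤ n → x i ∈ S.L0
  hy1 : ∀ j, 1 ≤ j → j ≤ m → y j ∈ S.L1
  hli : LinearIndependent ℂ
    (Sum.elim (fun i : Fin n => x ((i : ℕ) + 1)) (fun j : Fin m => y ((j : ℕ) + 1)))
  hspan : Submodule.span ℂ (Set.range
    (Sum.elim (fun i : Fin n => x ((i : ℕ) + 1)) (fun j : Fin m => y ((j : ℕ) + 1)))) = ⊤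
  hxx1 : ∀ i, 1 ≤ i → i ≤ n - 1 → S.bracket (x i) (x 1) = x (i + 1)
  hxn : S.bracket (x n) (x 1) = 0
  hxxk : ∀ i k, 1 ≤ i → i ≤ n → 2 ≤ k → k ≤ n → S.bracket (x i) (x k) = 0
  hyx1 : ∀ j, 1 ≤ j → j ≤ m - 1 → S.bracket (y j) (x 1) = y (j + 1)
  hym : S.bracket (y m) (x 1) = 0
  hyxk : ∀ j k, 1 ≤ j → j ≤ m → 2 ≤ k → k ≤ n → S.bracket (y j) (x k) = 0
  hnb : S.term (n + m - 1) = ⊥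
  hnt : ∀ t : ℕ, t + 1 < n + m → S.term t ≠ ⊥

namespace Ctx

variable {L : Type*} [AddCommGroup L] [Module ℂ L] (C : Ctx L)

/-- The bracket, as a plain function. -/
abbrev bb (a c : L) : L := C.S.bracket a c

/-- The adapted family indexed by `Fin n ⊕ Fin m`. -/
def e : Fin C.n ⊕ Fin C.m → L :=
  Sum.elim (fun i : Fin C.n => C.x ((i : ℕ) + 1)) (fun j : Fin C.m => C.y ((j : ℕ) + 1))

/-- The adapted basis. -/
noncomputable def b : Module.Basis (Fin C.n ⊕ Fin C.m) ℂ L := Module.Basis.mk C.hli (by rw [C.hspan])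

@[simp] lemma b_inl (i : Fin C.n) : C.b (Sum.inl i) = C.x ((i : ℕ) + 1) := by
  simp [b, e]

@[simp] lemma b_inr (j : Fin C.m) : C.b (Sum.inr j) = C.y ((j : ℕ) + 1) := by
  simp [b, e]

lemma bxx1 (i : ℕ) (h1 : 1 ≤ i) (h2 : i ≤ C.n - 1) : C.bb (C.x i) (C.x 1) = C.x (i + 1) :=
  C.hxx1 i h1 h2

lemma bxn : C.bb (C.x C.n) (C.x 1) = 0 := C.hxn

lemma bxxk (i k : ℕ) (h1 : 1 ≤ i) (h2 : i ≤ C.n) (h3 : 2 ≤ k) (h4 : k ≤ C.n) :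
    C.bb (C.x i) (C.x k) = 0 := C.hxxk i k h1 h2 h3 h4

lemma byx1 (j : ℕ) (h1 : 1 ≤ j) (h2 : j ≤ C.m - 1) : C.bb (C.y j) (C.x 1) = C.y (j + 1) :=
  C.hyx1 j h1 h2

lemma bym : C.bb (C.y C.m) (C.x 1) = 0 := C.hym

lemma byxk (j k : ℕ) (h1 : 1 ≤ j) (h2 : j ≤ C.m) (h3 : 2 ≤ k) (h4 : k ≤ C.n) :
    C.bb (C.y j) (C.x k) = 0 := C.hyxk j k h1 h2 h3 h4

/-- Even coordinate functionals. -/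
noncomputable def ψ (p : Fin C.n) : L →ₗ[ℂ] ℂ := C.b.coord (Sum.inl p)

/-- Odd coordinate functionals. -/
noncomputable def φ (q : Fin C.m) : L →ₗ[ℂ] ℂ := C.b.coord (Sum.inr q)

def p0 : Fin C.n := ⟨0, by have := C.hn; omega⟩
def q0 : Fin C.m := ⟨0, by have := C.hm; omega⟩
def q1 : Fin C.m := ⟨1, by have := C.hm; omega⟩

@[simp] lemma phi_y (q d : Fin C.m) :
    C.φ q (C.y ((d : ℕ) + 1)) = if d = q then 1 else 0 := by
  simp only [φ, Module.Basis.coord_apply]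
  rw [show C.y ((d : ℕ) + 1) = C.b (Sum.inr d) from (C.b_inr d).symm, Module.Basis.repr_self,
    Finsupp.single_apply]
  simp

@[simp] lemma phi_x (q : Fin C.m) (p : Fin C.n) : C.φ q (C.x ((p : ℕ) + 1)) = 0 := by
  simp only [φ, Module.Basis.coord_apply]
  rw [show C.x ((p : ℕ) + 1) = C.b (Sum.inl p) from (C.b_inl p).symm, Module.Basis.repr_self,
    Finsupp.single_apply]
  simp

@[simp] lemma psi_x (p d : Fin C.n) :
    C.ψ p (C.x ((d : ℕ) + 1)) = if d = p then 1 else 0 := by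
  simp only [ψ, Module.Basis.coord_apply]
  rw [show C.x ((d : ℕ) + 1) = C.b (Sum.inl d) from (C.b_inl d).symm, Module.Basis.repr_self,
    Finsupp.single_apply]
  simp

@[simp] lemma psi_y (p : Fin C.n) (d : Fin C.m) : C.ψ p (C.y ((d : ℕ) + 1)) = 0 := by
  simp only [ψ, Module.Basis.coord_apply]
  rw [show C.y ((d : ℕ) + 1) = C.b (Sum.inr d) from (C.b_inr d).symm, Module.Basis.repr_self,
    Finsupp.single_apply]
  simp

lemma sum_split (v : L) :
    (∑ p : Fin C.n, C.ψ p v • C.x ((p : ℕ) + 1)) +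
      (∑ q : Fin C.m, C.φ q v • C.y ((q : ℕ) + 1)) = v := by
  have h := C.b.sum_repr v
  rw [Fintype.sum_sum_type] at h
  simpa [ψ, φ, Module.Basis.coord_apply] using h

/-- A vector in `L₁` equals its odd expansion. -/
lemma expand1 {v : L} (hv : v ∈ C.S.L1) :
    v = ∑ q : Fin C.m, C.φ q v • C.y ((q : ℕ) + 1) := by
  have hsplit := C.sum_split v
  set v0 := ∑ p : Fin C.n, C.ψ p v • C.x ((p : ℕ) + 1) with hv0
  set v1 := ∑ q : Fin C.m, C.φ q v • C.y ((q : ℕ) + 1) with hv1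
  have h0 : v0 ∈ C.S.L0 := by
    exact Submodule.sum_mem _ fun p _ => Submodule.smul_mem _ _
      (C.hx0 _ (by omega) (by omega))
  have h1 : v1 ∈ C.S.L1 := by
    exact Submodule.sum_mem _ fun q _ => Submodule.smul_mem _ _
      (C.hy1 _ (by omega) (by omega))
  have h0' : v0 ∈ C.S.L1 := by
    have : v0 = v - v1 := by rw [← hsplit]; abel
    rw [this]; exact Submodule.sub_mem _ hv h1
  have : v0 = 0 := Submodule.disjoint_def.mp C.S.compl.disjoint v0 h0 h0'
  rw [← hsplit, this, zero_add]

/-- A vector in `L₀` equals its even expansion. -/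
lemma expand0 {v : L} (hv : v ∈ C.S.L0) :
    v = ∑ p : Fin C.n, C.ψ p v • C.x ((p : ℕ) + 1) := by
  have hsplit := C.sum_split v
  set v0 := ∑ p : Fin C.n, C.ψ p v • C.x ((p : ℕ) + 1) with hv0
  set v1 := ∑ q : Fin C.m, C.φ q v • C.y ((q : ℕ) + 1) with hv1
  have h0 : v0 ∈ C.S.L0 := by
    exact Submodule.sum_mem _ fun p _ => Submodule.smul_mem _ _
      (C.hx0 _ (by omega) (by omega))
  have h1 : v1 ∈ C.S.L1 := by
    exact Submodule.sum_mem _ fun q _ => Submodule.smul_mem _ _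
      (C.hy1 _ (by omega) (by omega))
  have h1' : v1 ∈ C.S.L0 := by
    have : v1 = v - v0 := by rw [← hsplit]; abel
    rw [this]; exact Submodule.sub_mem _ hv h0
  have : v1 = 0 := Submodule.disjoint_def.mp C.S.compl.disjoint.symm v1 h1 h1'
  rw [← hsplit, this, add_zero]

lemma phi_of_L0 {v : L} (hv : v ∈ C.S.L0) (q : Fin C.m) : C.φ q v = 0 := by
  conv_lhs => rw [C.expand0 hv]
  simp

lemma psi_of_L1 {v : L} (hv : v ∈ C.S.L1) (p : Fin C.n) : C.ψ p v = 0 := by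
  conv_lhs => rw [C.expand1 hv]
  simp

/-- Prove a property for all `z ∈ L` by checking it on the adapted basis. -/
lemma forall_basis {P : L → Prop} (h0 : P 0)
    (hadd : ∀ a c, P a → P c → P (a + c)) (hsmul : ∀ (r : ℂ) a, P a → P (r • a))
    (hx : ∀ i : Fin C.n, P (C.x ((i : ℕ) + 1))) (hy : ∀ j : Fin C.m, P (C.y ((j : ℕ) + 1)))
    (z : L) : P z := by
  have hz : z ∈ Submodule.span ℂ (Set.range
      (Sum.elim (fun i : Fin C.n => C.x ((i : ℕ) + 1))
        (fun j : Fin C.m => C.y ((j : ℕ) + 1)))) := by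
    rw [C.hspan]; exact Submodule.mem_top
  induction hz using Submodule.span_induction with
  | mem w hw =>
      obtain ⟨u, rfl⟩ := hw
      cases u with
      | inl i => exact hx i
      | inr j => exact hy j
  | zero => exact h0
  | add a c _ _ pa pc => exact hadd a c pa pc
  | smul r a _ pa => exact hsmul r a pa

/-- `[z, x_k] = 0` for every `z` and `2 ≤ k ≤ n`. -/
lemma zkill {k : ℕ} (hk2 : 2 ≤ k) (hkn : k ≤ C.n) (z : L) : C.bb z (C.x k) = 0 := by
  refine C.forall_basis (P := fun z => C.bb z (C.x k) = 0) ?_ ?_ ?_ ?_ ?_ z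
  · simp [bb]
  · intro a c ha hc; simp [bb, map_add, LinearMap.add_apply, ha, hc]
  · intro r a ha; simp [bb, map_smul, LinearMap.smul_apply, ha]
  · intro i; exact C.hxxk _ k (by omega) (by omega) hk2 hkn
  · intro j; exact C.hyxk _ k (by omega) (by omega) hk2 hkn

lemma ystep (q : Fin C.m) :
    C.bb (C.y ((q : ℕ) + 1)) (C.x 1) = if (q : ℕ) + 2 ≤ C.m then C.y ((q : ℕ) + 2) else 0 := by
  by_cases h : (q : ℕ) + 2 ≤ C.m
  · rw [if_pos h]; exact C.hyx1 _ (by omega) (by omega)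
  · rw [if_neg h]
    have : (q : ℕ) + 1 = C.m := by have := q.isLt; omega
    rw [this]; exact C.hym

lemma xstep (p : Fin C.n) :
    C.bb (C.x ((p : ℕ) + 1)) (C.x 1) = if (p : ℕ) + 2 ≤ C.n then C.x ((p : ℕ) + 2) else 0 := by
  by_cases h : (p : ℕ) + 2 ≤ C.n
  · rw [if_pos h]; exact C.hxx1 _ (by omega) (by omega)
  · rw [if_neg h]
    have : (p : ℕ) + 1 = C.n := by have := p.isLt; omega
    rw [this]; exact C.hxn

lemma bb_sum {ι : Type*} (s : Finset ι) (f : ι → L) (w : L) :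
    C.bb (∑ i ∈ s, f i) w = ∑ i ∈ s, C.bb (f i) w := by
  simp [bb, map_sum, LinearMap.sum_apply]

lemma bb_sum' {ι : Type*} (s : Finset ι) (f : ι → L) (w : L) :
    C.bb w (∑ i ∈ s, f i) = ∑ i ∈ s, C.bb w (f i) := by
  simp [bb, map_sum]

lemma bb_smul (r : ℂ) (a w : L) : C.bb (r • a) w = r • C.bb a w := by
  simp [bb, map_smul, LinearMap.smul_apply]

lemma bb_smul' (r : ℂ) (a w : L) : C.bb w (r • a) = r • C.bb w a := by
  simp [bb, map_smul]

/-- `φ_{q0}` (the `y₁`-coordinate) of `[v, x₁]` vanishes for `v ∈ L₁`. -/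
lemma shift_phi0 {v : L} (hv : v ∈ C.S.L1) : C.φ C.q0 (C.bb v (C.x 1)) = 0 := by
  conv_lhs => rw [C.expand1 hv]
  rw [C.bb_sum]
  rw [map_sum]
  refine Finset.sum_eq_zero fun q _ => ?_
  rw [C.bb_smul, map_smul, C.ystep q]
  by_cases h : (q : ℕ) + 2 ≤ C.m
  · rw [if_pos h]
    have h2 : ((q : ℕ) + 1) + 1 = (q : ℕ) + 2 := by omega
    have : C.y ((q : ℕ) + 2) = C.y (((⟨(q : ℕ) + 1, by omega⟩ : Fin C.m) : ℕ) + 1) := by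
      simp [h2]
    rw [this, C.phi_y]
    have : (⟨(q : ℕ) + 1, by omega⟩ : Fin C.m) ≠ C.q0 := by
      intro hq; apply congrArg Fin.val at hq; simp [q0] at hq
    rw [if_neg this]; simp
  · rw [if_neg h]; simp

/-- `φ_{q1}` (the `y₂`-coordinate) of `[v, x₁]` equals the `y₁`-coordinate of `v`, `v ∈ L₁`. -/
lemma shift_phi1 {v : L} (hv : v ∈ C.S.L1) : C.φ C.q1 (C.bb v (C.x 1)) = C.φ C.q0 v := by
  conv_lhs => rw [C.expand1 hv]
  rw [C.bb_sum, map_sum]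
  rw [Finset.sum_eq_single_of_mem C.q0 (Finset.mem_univ _)]
  · rw [C.bb_smul, map_smul, C.ystep C.q0]
    have h : ((C.q0 : ℕ)) + 2 ≤ C.m := by have := C.hm; simp [q0]; omega
    rw [if_pos h]
    have h2 : C.y ((C.q0 : ℕ) + 2) = C.y (((⟨(C.q0 : ℕ) + 1, by omega⟩ : Fin C.m) : ℕ) + 1) := by
      norm_num
    rw [h2, C.phi_y]
    have : (⟨(C.q0 : ℕ) + 1, by omega⟩ : Fin C.m) = C.q1 := by
      apply Fin.ext; simp [q0, q1]
    rw [if_pos this]; simp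
  · intro q _ hq
    rw [C.bb_smul, map_smul, C.ystep q]
    by_cases h : (q : ℕ) + 2 ≤ C.m
    · rw [if_pos h]
      have h2 : C.y ((q : ℕ) + 2) = C.y (((⟨(q : ℕ) + 1, by omega⟩ : Fin C.m) : ℕ) + 1) := by
        norm_num
      rw [h2, C.phi_y]
      have : (⟨(q : ℕ) + 1, by omega⟩ : Fin C.m) ≠ C.q1 := by
        intro hqq; apply congrArg Fin.val at hqq; simp [q1] at hqq
        apply hq; apply Fin.ext; simp [q0]; omega
      rw [if_neg this]; simp
    · rw [if_neg h]; simp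

/-- `ψ_{p0}` (the `x₁`-coordinate) of `[v, x₁]` vanishes for `v ∈ L₀`. -/
lemma shift_psi0 {v : L} (hv : v ∈ C.S.L0) : C.ψ C.p0 (C.bb v (C.x 1)) = 0 := by
  conv_lhs => rw [C.expand0 hv]
  rw [C.bb_sum, map_sum]
  refine Finset.sum_eq_zero fun p _ => ?_
  rw [C.bb_smul, map_smul, C.xstep p]
  by_cases h : (p : ℕ) + 2 ≤ C.n
  · rw [if_pos h]
    have : C.x ((p : ℕ) + 2) = C.x (((⟨(p : ℕ) + 1, by omega⟩ : Fin C.n) : ℕ) + 1) := by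
      norm_num
    rw [this, C.psi_x]
    have : (⟨(p : ℕ) + 1, by omega⟩ : Fin C.n) ≠ C.p0 := by
      intro hp; apply congrArg Fin.val at hp; simp [p0] at hp
    rw [if_neg this]; simp
  · rw [if_neg h]; simp

/-- `[x_i, y_j]`, with out-of-range indices sent to `0`. -/
noncomputable def G (i j : ℕ) : L :=
  if 1 ≤ i ∧ i ≤ C.n ∧ 1 ≤ j ∧ j ≤ C.m then C.bb (C.x i) (C.y j) else 0

lemma G_eq {i j : ℕ} (h1 : 1 ≤ i) (h2 : i ≤ C.n) (h3 : 1 ≤ j) (h4 : j ≤ C.m) :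
    C.G i j = C.bb (C.x i) (C.y j) := if_pos ⟨h1, h2, h3, h4⟩

lemma G_zero {i j : ℕ} (h : ¬(1 ≤ i ∧ i ≤ C.n ∧ 1 ≤ j ∧ j ≤ C.m)) : C.G i j = 0 := if_neg h

lemma G_mem1 (i j : ℕ) : C.G i j ∈ C.S.L1 := by
  unfold G
  split
  · next h => exact C.S.g01 _ (C.hx0 i h.1 h.2.1) _ (C.hy1 j h.2.2.1 h.2.2.2)
  · exact Submodule.zero_mem _

lemma G_rec {i j : ℕ} (hi : 1 ≤ i) (hj : 1 ≤ j) (hjm : j + 1 ≤ C.m) :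
    C.G i (j + 1) = C.bb (C.G i j) (C.x 1) - C.G (i + 1) j := by
  by_cases hin : i ≤ C.n
  · have hyj : C.y j ∈ C.S.L1 := C.hy1 j hj (by omega)
    have hx1 : C.x 1 ∈ C.S.L0 := C.hx0 1 le_rfl (by have := C.hn; omega)
    have hl := C.S.leib10 (C.x i) (C.y j) hyj (C.x 1) hx1
    rw [C.hyx1 j hj (by omega)] at hl
    rw [C.G_eq hi hin (by omega) hjm, C.G_eq hi hin hj (by omega)]
    by_cases hin1 : i + 1 ≤ C.n
    · rw [C.G_eq (by omega) hin1 hj (by omega)]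
      rw [C.hxx1 i hi (by omega)] at hl
      exact hl
    · have hieq : i = C.n := by omega
      subst hieq
      rw [C.G_zero (i := C.n + 1) (j := j) (by omega), C.hxn] at *
      simp only [map_zero, LinearMap.zero_apply] at hl
      simpa [bb] using hl
  · rw [C.G_zero (i := i) (j := j + 1) (fun h => hin h.2.1),
      C.G_zero (i := i) (j := j) (fun h => hin h.2.1),
      C.G_zero (i := i + 1) (j := j) (fun h => hin (by omega))]
    simp [bb]

lemma G_top {i : ℕ} (hi : 1 ≤ i) : C.bb (C.G i C.m) (C.x 1) = C.G (i + 1) C.m := by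
  have hm1 : 1 ≤ C.m := by have := C.hm; omega
  by_cases hin : i ≤ C.n
  · have hym' : C.y C.m ∈ C.S.L1 := C.hy1 C.m hm1 le_rfl
    have hx1 : C.x 1 ∈ C.S.L0 := C.hx0 1 le_rfl (by have := C.hn; omega)
    have hl := C.S.leib10 (C.x i) (C.y C.m) hym' (C.x 1) hx1
    rw [C.hym] at hl
    simp only [bb] at hl ⊢
    rw [map_zero] at hl
    rw [C.G_eq hi hin hm1 le_rfl]
    by_cases hin1 : i + 1 ≤ C.n
    · rw [C.G_eq (by omega) hin1 hm1 le_rfl]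
      rw [C.hxx1 i hi (by omega)] at hl
      linear_combination (norm := module) -hl
    · have hieq : i = C.n := by omega
      subst hieq
      rw [C.G_zero (i := C.n + 1) (j := C.m) (by omega)]
      rw [C.hxn] at hl
      simp only [map_zero, LinearMap.zero_apply] at hl
      linear_combination (norm := module) -hl
  · rw [C.G_zero (i := i) (j := C.m) (fun h => hin h.2.1),
      C.G_zero (i := i + 1) (j := C.m) (fun h => hin (by omega))]
    simp [bb]

/-- `y₁`-coordinate of `[x_k, y₁]`. -/
noncomputable def rho (k : ℕ) : ℂ := C.φ C.q0 (C.G k 1)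

/-- `y₂`-coordinate of `[x_k, y₁]`. -/
noncomputable def th (k : ℕ) : ℂ := C.φ C.q1 (C.G k 1)

lemma G_phi0 : ∀ d i : ℕ, 1 ≤ i → d + 1 ≤ C.m →
    C.φ C.q0 (C.G i (d + 1)) = (-1 : ℂ) ^ d * C.rho (i + d) := by
  intro d
  induction d with
  | zero => intro i _ _; simp [rho]
  | succ d ih =>
      intro i hi hdm
      rw [C.G_rec hi (by omega) (by omega), map_sub, C.shift_phi0 (C.G_mem1 i (d + 1)),
        ih (i + 1) (by omega) (by omega)]
      rw [show i + 1 + d = i + (d + 1) by omega]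
      ring

lemma rho_big {k : ℕ} (hk : C.n < k) : C.rho k = 0 := by
  rw [rho, C.G_zero (by omega), map_zero]

lemma rho_high {k : ℕ} (hk : C.m + 1 ≤ k) : C.rho k = 0 := by
  by_cases hkn : k ≤ C.n
  · have hm1 : 1 ≤ C.m := by have := C.hm; omega
    set i := k - C.m with hidef
    have hi : 1 ≤ i := by omega
    have h := congrArg (C.φ C.q0) (C.G_top (i := i) hi)
    rw [C.shift_phi0 (C.G_mem1 i C.m)] at h
    have hm' : C.m = (C.m - 1) + 1 := by omega
    rw [hm'] at h
    rw [C.G_phi0 (C.m - 1) (i + 1) (by omega) (by omega)] at h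
    have hik : i + 1 + (C.m - 1) = k := by omega
    rw [hik] at h
    have hpow : ((-1 : ℂ)) ^ (C.m - 1) ≠ 0 := pow_ne_zero _ (by norm_num)
    exact (mul_eq_zero.mp h.symm).resolve_left hpow
  · exact C.rho_big (by omega)

lemma G1_kill {k : ℕ} (hk2 : 2 ≤ k) (hkn : k ≤ C.n) (z : L) : C.bb z (C.G k 1) = 0 := by
  rw [C.G_eq (by omega) hkn le_rfl (by have := C.hm; omega)]
  have h := C.S.leib01 z (C.x k) (C.hx0 k (by omega) hkn) (C.y 1)
    (C.hy1 1 le_rfl (by have := C.hm; omega))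
  rw [show C.S.bracket z (C.x k) = 0 from C.zkill hk2 hkn z] at h
  rw [show C.S.bracket (C.S.bracket z (C.y 1)) (C.x k) = 0 from C.zkill hk2 hkn _] at h
  simpa [bb] using h

/-- Expansion of brackets against `G k 1`. -/
lemma bb_G1_expand (p k : ℕ) (hp1 : 1 ≤ p) (hpn : p ≤ C.n) :
    C.bb (C.x p) (C.G k 1) = ∑ q : Fin C.m, C.φ q (C.G k 1) • C.G p ((q : ℕ) + 1) := by
  conv_lhs => rw [C.expand1 (C.G_mem1 k 1)]
  rw [C.bb_sum']
  refine Finset.sum_congr rfl fun q _ => ?_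
  rw [C.bb_smul']
  congr 1
  exact (C.G_eq hp1 hpn (by omega) (by exact q.isLt)).symm

lemma rho_ge2 : ∀ k : ℕ, 2 ≤ k → C.rho k = 0 := by
  suffices H : ∀ d k : ℕ, 2 ≤ k → C.m + 1 ≤ k + d → C.rho k = 0 by
    intro k hk
    exact H (C.m + 1) k hk (by omega)
  intro d
  induction d with
  | zero => intro k _ h; exact C.rho_high (by omega)
  | succ d ih =>
      intro k hk2 hkd
      by_cases hkm : C.m + 1 ≤ k + d
      · exact ih k hk2 hkm
      by_cases hkn : k ≤ C.n
      · -- main identity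
        have h0 : C.bb (C.x k) (C.G k 1) = 0 := C.G1_kill hk2 hkn _
        rw [C.bb_G1_expand k k (by omega) hkn] at h0
        have h1 := congrArg (C.φ C.q0) h0
        rw [map_sum, map_zero] at h1
        have h2 : ∀ q : Fin C.m, q ≠ C.q0 →
            C.φ C.q0 (C.φ q (C.G k 1) • C.G k ((q : ℕ) + 1)) = 0 := by
          intro q hq
          have hq1 : 1 ≤ (q : ℕ) := by
            rcases Nat.eq_zero_or_pos (q : ℕ) with h | h
            · exact absurd (Fin.ext (by simp [q0, h])) hq
            · omega
          rw [map_smul, C.G_phi0 (q : ℕ) k (by omega) (by exact q.isLt)]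
          rw [ih (k + q) (by omega) (by omega)]
          simp
        rw [Finset.sum_eq_single_of_mem C.q0 (Finset.mem_univ _) (fun q _ => h2 q)] at h1
        rw [map_smul, smul_eq_mul] at h1
        have hq0v : ((C.q0 : ℕ)) = 0 := rfl
        rw [hq0v] at h1
        exact mul_self_eq_zero.mp h1
      · exact C.rho_big (by omega)

lemma rho_one : C.rho 1 = 0 := by
  have hn := C.hn; have hm := C.hm
  have hx1 : C.x 1 ∈ C.S.L0 := C.hx0 1 le_rfl (by omega)
  have hy1' : C.y 1 ∈ C.S.L1 := C.hy1 1 le_rfl (by omega)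
  have h := C.S.leib01 (C.x 1) (C.x 1) hx1 (C.y 1) hy1'
  rw [C.hxx1 1 le_rfl (by omega)] at h
  have hG : C.S.bracket (C.x 1) (C.y 1) = C.G 1 1 := (C.G_eq le_rfl (by omega) le_rfl (by omega)).symm
  rw [hG] at h
  have hG2 : C.S.bracket (C.x 2) (C.y 1) = C.G 2 1 := (C.G_eq (by omega) (by omega) le_rfl (by omega)).symm
  rw [hG2] at h
  -- h : bb (x 1) (G 1 1) = G 2 1 - bb (G 1 1) (x 1)
  have hexp : C.bb (C.x 1) (C.G 1 1) = ∑ q : Fin C.m, C.φ q (C.G 1 1) • C.G 1 ((q : ℕ) + 1) :=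
    C.bb_G1_expand 1 1 le_rfl (by omega)
  have h1 := congrArg (C.φ C.q0) (hexp.symm.trans h)
  rw [map_sub, C.shift_phi0 (C.G_mem1 1 1), map_sum] at h1
  have h2 : ∀ q : Fin C.m, q ≠ C.q0 →
      C.φ C.q0 (C.φ q (C.G 1 1) • C.G 1 ((q : ℕ) + 1)) = 0 := by
    intro q hq
    have hq1 : 1 ≤ (q : ℕ) := by
      rcases Nat.eq_zero_or_pos (q : ℕ) with h' | h'
      · exact absurd (Fin.ext (by simp [q0, h'])) hq
      · omega
    rw [map_smul, C.G_phi0 (q : ℕ) 1 le_rfl (by exact q.isLt),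
      C.rho_ge2 (1 + q) (by omega)]
    simp
  rw [Finset.sum_eq_single_of_mem C.q0 (Finset.mem_univ _) (fun q _ => h2 q)] at h1
  rw [map_smul, smul_eq_mul] at h1
  have hq0v : ((C.q0 : ℕ)) = 0 := rfl
  rw [hq0v] at h1
  rw [show C.φ C.q0 (C.G 2 1) = C.rho 2 from rfl, C.rho_ge2 2 le_rfl, sub_zero] at h1
  exact mul_self_eq_zero.mp h1

lemma rho_zero : ∀ k : ℕ, C.rho k = 0 := by
  intro k
  match k with
  | 0 => rw [rho, C.G_zero (by omega), map_zero]
  | 1 => exact C.rho_one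
  | (k + 2) => exact C.rho_ge2 _ (by omega)

lemma G_phi1 : ∀ d i : ℕ, 1 ≤ i → d + 1 ≤ C.m →
    C.φ C.q1 (C.G i (d + 1)) = (-1 : ℂ) ^ d * C.th (i + d) := by
  intro d
  induction d with
  | zero => intro i _ _; simp [th]
  | succ d ih =>
      intro i hi hdm
      rw [C.G_rec hi (by omega) (by omega), map_sub,
        C.shift_phi1 (C.G_mem1 i (d + 1))]
      rw [show C.φ C.q0 (C.G i (d + 1)) = (-1:ℂ)^d * C.rho (i+d) from C.G_phi0 d i hi (by omega)]
      rw [C.rho_zero (i + d), ih (i + 1) (by omega) (by omega)]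
      rw [show i + 1 + d = i + (d + 1) by omega]
      ring

lemma th_big {k : ℕ} (hk : C.n < k) : C.th k = 0 := by
  rw [th, C.G_zero (by omega), map_zero]

lemma th_high {k : ℕ} (hk : C.m + 1 ≤ k) : C.th k = 0 := by
  by_cases hkn : k ≤ C.n
  · have hm1 : 1 ≤ C.m := by have := C.hm; omega
    set i := k - C.m with hidef
    have hi : 1 ≤ i := by omega
    have h := congrArg (C.φ C.q1) (C.G_top (i := i) hi)
    rw [C.shift_phi1 (C.G_mem1 i C.m)] at h
    have hm' : C.m = (C.m - 1) + 1 := by omega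
    rw [hm'] at h
    rw [C.G_phi0 (C.m - 1) i (by omega) (by omega),
      C.G_phi1 (C.m - 1) (i + 1) (by omega) (by omega)] at h
    rw [C.rho_zero (i + (C.m - 1))] at h
    have hik : i + 1 + (C.m - 1) = k := by omega
    rw [hik] at h
    have hpow : ((-1 : ℂ)) ^ (C.m - 1) ≠ 0 := pow_ne_zero _ (by norm_num)
    simp only [mul_zero] at h
    exact (mul_eq_zero.mp h.symm).resolve_left hpow
  · exact C.th_big (by omega)

lemma th_ge2 : ∀ k : ℕ, 2 ≤ k → C.th k = 0 := by
  suffices H : ∀ d k : ℕ, 2 ≤ k → C.m + 1 ≤ k + d → C.th k = 0 by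
    intro k hk
    exact H (C.m + 1) k hk (by omega)
  intro d
  induction d with
  | zero => intro k _ h; exact C.th_high (by omega)
  | succ d ih =>
      intro k hk2 hkd
      by_cases hkm : C.m + 1 ≤ k + d
      · exact ih k hk2 hkm
      by_cases hkn : k ≤ C.n
      · have h0 : C.bb (C.x (k - 1)) (C.G k 1) = 0 := C.G1_kill hk2 hkn _
        rw [C.bb_G1_expand (k - 1) k (by omega) (by omega)] at h0
        have h1 := congrArg (C.φ C.q1) h0
        rw [map_sum, map_zero] at h1
        have h2 : ∀ q : Fin C.m, q ≠ C.q1 →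
            C.φ C.q1 (C.φ q (C.G k 1) • C.G (k - 1) ((q : ℕ) + 1)) = 0 := by
          intro q hq
          rw [map_smul, C.G_phi1 (q : ℕ) (k - 1) (by omega) (by exact q.isLt)]
          rcases Nat.lt_or_ge (q : ℕ) 2 with h' | h'
          · have hq0 : (q : ℕ) = 0 := by
              rcases Nat.lt_or_ge (q : ℕ) 1 with h'' | h''
              · omega
              · exfalso
                exact hq (Fin.ext (show (q : ℕ) = ((C.q1 : ℕ)) by
                  rw [show ((C.q1 : ℕ)) = 1 from rfl]; omega))
            have hqq : q = C.q0 := Fin.ext (show (q : ℕ) = ((C.q0 : ℕ)) by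
              rw [show ((C.q0 : ℕ)) = 0 from rfl, hq0])
            have : C.φ q (C.G k 1) = C.rho k := by rw [rho, hqq]
            rw [this, C.rho_zero k]
            simp
          · rw [ih (k - 1 + (q : ℕ)) (by omega) (by omega)]
            simp
        rw [Finset.sum_eq_single_of_mem C.q1 (Finset.mem_univ _) (fun q _ => h2 q)] at h1
        rw [map_smul, smul_eq_mul] at h1
        have hq1v : ((C.q1 : ℕ)) = 1 := rfl
        rw [hq1v, C.G_phi1 1 (k - 1) (by omega) (by omega)] at h1
        rw [show k - 1 + 1 = k by omega] at h1
        rw [show C.φ C.q1 (C.G k 1) = C.th k from rfl] at h1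
        have : C.th k * C.th k = 0 := by linear_combination -h1
        exact mul_self_eq_zero.mp this
      · exact C.th_big (by omega)

/-- `[y_i, y_j]`, with out-of-range indices sent to `0`. -/
noncomputable def Hh (i j : ℕ) : L :=
  if 1 ≤ i ∧ i ≤ C.m ∧ 1 ≤ j ∧ j ≤ C.m then C.bb (C.y i) (C.y j) else 0

lemma Hh_eq {i j : ℕ} (h1 : 1 ≤ i) (h2 : i ≤ C.m) (h3 : 1 ≤ j) (h4 : j ≤ C.m) :
    C.Hh i j = C.bb (C.y i) (C.y j) := if_pos ⟨h1, h2, h3, h4⟩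

lemma Hh_zero {i j : ℕ} (h : ¬(1 ≤ i ∧ i ≤ C.m ∧ 1 ≤ j ∧ j ≤ C.m)) : C.Hh i j = 0 := if_neg h

lemma Hh_mem0 (i j : ℕ) : C.Hh i j ∈ C.S.L0 := by
  unfold Hh
  split
  · next h => exact C.S.g11 _ (C.hy1 i h.1 h.2.1) _ (C.hy1 j h.2.2.1 h.2.2.2)
  · exact Submodule.zero_mem _

lemma Hh_rec {i j : ℕ} (hi : 1 ≤ i) (hj : 1 ≤ j) (hjm : j + 1 ≤ C.m) :
    C.Hh i (j + 1) = C.bb (C.Hh i j) (C.x 1) - C.Hh (i + 1) j := by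
  by_cases him : i ≤ C.m
  · have hyj : C.y j ∈ C.S.L1 := C.hy1 j hj (by omega)
    have hx1 : C.x 1 ∈ C.S.L0 := C.hx0 1 le_rfl (by have := C.hn; omega)
    have hl := C.S.leib10 (C.y i) (C.y j) hyj (C.x 1) hx1
    rw [C.hyx1 j hj (by omega)] at hl
    rw [C.Hh_eq hi him (by omega) hjm, C.Hh_eq hi him hj (by omega)]
    by_cases him1 : i + 1 ≤ C.m
    · rw [C.Hh_eq (by omega) him1 hj (by omega)]
      rw [C.hyx1 i hi (by omega)] at hl
      exact hl
    · have hieq : i = C.m := by omega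
      subst hieq
      rw [C.Hh_zero (i := C.m + 1) (j := j) (by omega), C.hym] at *
      simp only [map_zero, LinearMap.zero_apply] at hl
      simpa [bb] using hl
  · rw [C.Hh_zero (i := i) (j := j + 1) (fun h => him h.2.1),
      C.Hh_zero (i := i) (j := j) (fun h => him h.2.1),
      C.Hh_zero (i := i + 1) (j := j) (fun h => him (by omega))]
    simp [bb]

/-- `x₁`-coordinate of `[y_k, y₁]`. -/
noncomputable def sc (k : ℕ) : ℂ := C.ψ C.p0 (C.Hh k 1)

lemma H_psi0 : ∀ d i : ℕ, 1 ≤ i → d + 1 ≤ C.m →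
    C.ψ C.p0 (C.Hh i (d + 1)) = (-1 : ℂ) ^ d * C.sc (i + d) := by
  intro d
  induction d with
  | zero => intro i _ _; simp [sc]
  | succ d ih =>
      intro i hi hdm
      rw [C.Hh_rec hi (by omega) (by omega), map_sub, C.shift_psi0 (C.Hh_mem0 i (d + 1)),
        ih (i + 1) (by omega) (by omega)]
      rw [show i + 1 + d = i + (d + 1) by omega]
      ring

/-- Span of `y_a, …, y_m`. -/
noncomputable def Ysp (a : ℕ) : Submodule ℂ L := Submodule.span ℂ (C.y '' Set.Icc a C.m)

/-- Span of `x_a, …, x_n`. -/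
noncomputable def Xsp (a : ℕ) : Submodule ℂ L := Submodule.span ℂ (C.x '' Set.Icc a C.n)

lemma mem_Ysp {v : L} (hv : v ∈ C.S.L1) (a : ℕ)
    (h : ∀ q : Fin C.m, (q : ℕ) + 1 < a → C.φ q v = 0) : v ∈ C.Ysp a := by
  rw [C.expand1 hv]
  refine Submodule.sum_mem _ fun q _ => ?_
  by_cases hq : (q : ℕ) + 1 < a
  · rw [h q hq, zero_smul]; exact Submodule.zero_mem _
  · exact Submodule.smul_mem _ _ (Submodule.subset_span
      ⟨(q : ℕ) + 1, ⟨by omega, by have := q.isLt; omega⟩, rfl⟩)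

lemma mem_Xsp {v : L} (hv : v ∈ C.S.L0) (a : ℕ)
    (h : ∀ p : Fin C.n, (p : ℕ) + 1 < a → C.ψ p v = 0) : v ∈ C.Xsp a := by
  rw [C.expand0 hv]
  refine Submodule.sum_mem _ fun p _ => ?_
  by_cases hp : (p : ℕ) + 1 < a
  · rw [h p hp, zero_smul]; exact Submodule.zero_mem _
  · exact Submodule.smul_mem _ _ (Submodule.subset_span
      ⟨(p : ℕ) + 1, ⟨by omega, by have := p.isLt; omega⟩, rfl⟩)

lemma G_in_Y2 (i j : ℕ) : C.G i j ∈ C.Ysp 2 := by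
  by_cases h : 1 ≤ i ∧ i ≤ C.n ∧ 1 ≤ j ∧ j ≤ C.m
  · refine C.mem_Ysp (C.G_mem1 i j) 2 fun q hq => ?_
    have hq0 : q = C.q0 := Fin.ext (show (q : ℕ) = ((C.q0 : ℕ)) by
      rw [show ((C.q0 : ℕ)) = 0 from rfl]; omega)
    subst hq0
    obtain ⟨h1, h2, h3, h4⟩ := h
    have hj : j = (j - 1) + 1 := by omega
    rw [hj, C.G_phi0 (j - 1) i h1 (by omega), C.rho_zero, mul_zero]
  · rw [C.G_zero h]; exact Submodule.zero_mem _

lemma G_in_Y3 {i : ℕ} (j : ℕ) (hi : 2 ≤ i) : C.G i j ∈ C.Ysp 3 := by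
  by_cases h : 1 ≤ i ∧ i ≤ C.n ∧ 1 ≤ j ∧ j ≤ C.m
  · refine C.mem_Ysp (C.G_mem1 i j) 3 fun q hq => ?_
    obtain ⟨h1, h2, h3, h4⟩ := h
    have hj : j = (j - 1) + 1 := by omega
    rcases Nat.lt_or_ge (q : ℕ) 1 with h' | h'
    · have hq0 : q = C.q0 := Fin.ext (show (q : ℕ) = ((C.q0 : ℕ)) by
        rw [show ((C.q0 : ℕ)) = 0 from rfl]; omega)
      subst hq0
      rw [hj, C.G_phi0 (j - 1) i h1 (by omega), C.rho_zero, mul_zero]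
    · have hq1 : q = C.q1 := Fin.ext (show (q : ℕ) = ((C.q1 : ℕ)) by
        rw [show ((C.q1 : ℕ)) = 1 from rfl]; omega)
      subst hq1
      rw [hj, C.G_phi1 (j - 1) i h1 (by omega), C.th_ge2 (i + (j - 1)) (by omega), mul_zero]
  · rw [C.G_zero h]; exact Submodule.zero_mem _

lemma H_in_X2 (hs : ∀ k, C.sc k = 0) (i j : ℕ) : C.Hh i j ∈ C.Xsp 2 := by
  by_cases h : 1 ≤ i ∧ i ≤ C.m ∧ 1 ≤ j ∧ j ≤ C.m
  · refine C.mem_Xsp (C.Hh_mem0 i j) 2 fun p hp => ?_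
    have hp0 : p = C.p0 := Fin.ext (show (p : ℕ) = ((C.p0 : ℕ)) by
      rw [show ((C.p0 : ℕ)) = 0 from rfl]; omega)
    subst hp0
    obtain ⟨h1, h2, h3, h4⟩ := h
    have hj : j = (j - 1) + 1 := by omega
    rw [hj, C.H_psi0 (j - 1) i h1 (by omega), hs, mul_zero]
  · rw [C.Hh_zero h]; exact Submodule.zero_mem _

lemma bracket_mem_term {k : ℕ} {a : L} (ha : a ∈ C.S.term k) (bz : L) :
    C.bb a bz ∈ C.S.term (k + 1) := by
  show C.bb a bz ∈ C.S.bracketSpan (C.S.term k) ⊤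
  exact Submodule.subset_span ⟨a, ha, bz, Submodule.mem_top, rfl⟩

lemma term_succ_le (k : ℕ) : C.S.term (k + 1) ≤ C.S.term k := by
  induction k with
  | zero => exact le_top
  | succ k ih =>
      show C.S.bracketSpan (C.S.term (k + 1)) ⊤ ≤ C.S.bracketSpan (C.S.term k) ⊤
      exact Submodule.span_mono fun z hz => by
        obtain ⟨a, ha, bz, hb, rfl⟩ := hz
        exact ⟨a, ih ha, bz, hb, rfl⟩

lemma term_antitone {i j : ℕ} (h : i ≤ j) : C.S.term j ≤ C.S.term i := by
  induction j with
  | zero => have : i = 0 := by omega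
            subst this; exact le_rfl
  | succ j ih =>
      rcases Nat.lt_or_ge i (j + 1) with h' | h'
      · exact (C.term_succ_le j).trans (ih (by omega))
      · have : i = j + 1 := by omega
        subst this; exact le_rfl

lemma term_stab {k : ℕ} (h : C.S.term (k + 1) = C.S.term k) :
    ∀ j, k ≤ j → C.S.term j = C.S.term k := by
  intro j hj
  induction j with
  | zero => have : k = 0 := by omega
            subst this; rfl
  | succ j ih =>
      rcases Nat.lt_or_ge k (j + 1) with h' | h'
      · have hj' := ih (by omega)
        show C.S.bracketSpan (C.S.term j) ⊤ = C.S.term k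
        rw [hj']
        exact h
      · have : k = j + 1 := by omega
        subst this; rfl

lemma term_ne {k : ℕ} (h : k ≤ C.n + C.m - 2) : C.S.term k ≠ ⊥ :=
  C.hnt k (by have := C.hn; have := C.hm; omega)

lemma term_strict {k : ℕ} (h : k ≤ C.n + C.m - 2) : C.S.term (k + 1) < C.S.term k := by
  rcases lt_or_eq_of_le (C.term_succ_le k) with h' | h'
  · exact h'
  · exfalso
    have hst := C.term_stab h' (C.n + C.m - 1) (by omega)
    have := C.term_ne h
    rw [← hst] at this
    exact this C.hnb

lemma finrank_term_ge [FiniteDimensional ℂ L] :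
    ∀ d k : ℕ, k + d = C.n + C.m - 2 → C.n + C.m - 1 - k ≤ Module.finrank ℂ (C.S.term k) := by
  intro d
  induction d with
  | zero =>
      intro k hk
      have hne := C.term_ne (k := k) (by omega)
      have : 0 < Module.finrank ℂ (C.S.term k) := by
        rcases Nat.eq_zero_or_pos (Module.finrank ℂ (C.S.term k)) with h | h
        · exact absurd (Submodule.finrank_eq_zero.mp h) hne
        · exact h
      omega
  | succ d ih =>
      intro k hk
      have h1 := ih (k + 1) (by omega)
      have h2 : Module.finrank ℂ (C.S.term (k + 1)) < Module.finrank ℂ (C.S.term k) :=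
        Submodule.finrank_lt_finrank_of_lt (C.term_strict (by omega))
      omega

/-- `L² ≤ P` provided all brackets of pairs of basis vectors lie in `P`. -/
lemma term1_le {P : Submodule ℂ L}
    (h : ∀ u v : Fin C.n ⊕ Fin C.m, C.bb (C.e u) (C.e v) ∈ P) :
    C.S.term 1 ≤ P := by
  have hall : ∀ a bz : L, C.bb a bz ∈ P := by
    intro a
    refine C.forall_basis (P := fun a => ∀ bz : L, C.bb a bz ∈ P) ?_ ?_ ?_ ?_ ?_ a
    · intro bz; simp [bb]
    · intro a c ha hc bz
      have : C.bb (a + c) bz = C.bb a bz + C.bb c bz := by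
        simp [bb, map_add, LinearMap.add_apply]
      rw [this]; exact Submodule.add_mem _ (ha bz) (hc bz)
    · intro r a ha bz
      have : C.bb (r • a) bz = r • C.bb a bz := C.bb_smul r a bz
      rw [this]; exact Submodule.smul_mem _ _ (ha bz)
    · intro i
      refine C.forall_basis (P := fun bz => C.bb (C.x ((i : ℕ) + 1)) bz ∈ P) ?_ ?_ ?_ ?_ ?_
      · simp [bb]
      · intro a c ha hc
        rw [show C.bb (C.x ((i : ℕ) + 1)) (a + c)
            = C.bb (C.x ((i : ℕ) + 1)) a + C.bb (C.x ((i : ℕ) + 1)) c by simp [bb, map_add]]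
        exact Submodule.add_mem _ ha hc
      · intro r a ha
        rw [C.bb_smul' r a _]; exact Submodule.smul_mem _ _ ha
      · intro k; exact h (Sum.inl i) (Sum.inl k)
      · intro j; exact h (Sum.inl i) (Sum.inr j)
    · intro j
      refine C.forall_basis (P := fun bz => C.bb (C.y ((j : ℕ) + 1)) bz ∈ P) ?_ ?_ ?_ ?_ ?_
      · simp [bb]
      · intro a c ha hc
        rw [show C.bb (C.y ((j : ℕ) + 1)) (a + c)
            = C.bb (C.y ((j : ℕ) + 1)) a + C.bb (C.y ((j : ℕ) + 1)) c by simp [bb, map_add]]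
        exact Submodule.add_mem _ ha hc
      · intro r a ha
        rw [C.bb_smul' r a _]; exact Submodule.smul_mem _ _ ha
      · intro k; exact h (Sum.inr j) (Sum.inl k)
      · intro i; exact h (Sum.inr j) (Sum.inr i)
  show C.S.bracketSpan (C.S.term 0) ⊤ ≤ P
  refine Submodule.span_le.mpr ?_
  rintro z ⟨a, -, bz, -, rfl⟩
  exact hall a bz

lemma bracket_all_basis {a : L} {P : Submodule ℂ L}
    (hx : ∀ k : Fin C.n, C.bb a (C.x ((k : ℕ) + 1)) ∈ P)
    (hy : ∀ j : Fin C.m, C.bb a (C.y ((j : ℕ) + 1)) ∈ P) :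
    ∀ bz, C.bb a bz ∈ P := by
  intro bz
  refine C.forall_basis (P := fun bz => C.bb a bz ∈ P) ?_ ?_ ?_ hx hy bz
  · simp [bb]
  · intro u v hu hv
    rw [show C.bb a (u + v) = C.bb a u + C.bb a v by simp [bb, map_add]]
    exact Submodule.add_mem _ hu hv
  · intro r u hu
    rw [C.bb_smul']; exact Submodule.smul_mem _ _ hu

lemma bracket_span_le {s : Set L} {P : Submodule ℂ L}
    (h : ∀ a ∈ s, ∀ bz, C.bb a bz ∈ P) :
    ∀ a ∈ Submodule.span ℂ s, ∀ bz, C.bb a bz ∈ P := by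
  intro a ha
  induction ha using Submodule.span_induction with
  | mem w hw => exact h w hw
  | zero => intro bz; simp [bb]
  | add u v _ _ hu hv =>
      intro bz
      rw [show C.bb (u + v) bz = C.bb u bz + C.bb v bz by
        simp [bb, map_add, LinearMap.add_apply]]
      exact Submodule.add_mem _ (hu bz) (hv bz)
  | smul r u _ hu =>
      intro bz
      rw [C.bb_smul]; exact Submodule.smul_mem _ _ (hu bz)

noncomputable def UU : Submodule ℂ L := C.Xsp 2 ⊔ C.Ysp 2
noncomputable def VV : Submodule ℂ L := C.Xsp 2 ⊔ C.Ysp 3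

lemma x_mem_Xsp {a i : ℕ} (ha : a ≤ i) (h1 : 1 ≤ i) (h2 : i ≤ C.n) : C.x i ∈ C.Xsp a :=
  Submodule.subset_span ⟨i, ⟨ha, h2⟩, rfl⟩

lemma y_mem_Ysp {a j : ℕ} (ha : a ≤ j) (h1 : 1 ≤ j) (h2 : j ≤ C.m) : C.y j ∈ C.Ysp a :=
  Submodule.subset_span ⟨j, ⟨ha, h2⟩, rfl⟩

lemma Xsp_le_term1 : C.Xsp 2 ≤ C.S.term 1 := by
  refine Submodule.span_le.mpr ?_
  rintro z ⟨i, ⟨hi2, hin⟩, rfl⟩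
  have : C.x i = C.bb (C.x (i - 1)) (C.x 1) := by
    rw [C.bxx1 (i - 1) (by omega) (by omega), show i - 1 + 1 = i by omega]
  rw [this]
  exact C.bracket_mem_term (k := 0) Submodule.mem_top _

lemma Ysp_le_term1 : C.Ysp 2 ≤ C.S.term 1 := by
  refine Submodule.span_le.mpr ?_
  rintro z ⟨j, ⟨hj2, hjm⟩, rfl⟩
  have : C.y j = C.bb (C.y (j - 1)) (C.x 1) := by
    rw [C.byx1 (j - 1) (by omega) (by omega), show j - 1 + 1 = j by omega]
  rw [this]
  exact C.bracket_mem_term (k := 0) Submodule.mem_top _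

lemma term1_le_good (hs : ∀ k, C.sc k = 0) : C.S.term 1 ≤ C.UU := by
  refine C.term1_le fun u v => ?_
  cases u with
  | inl i =>
      cases v with
      | inl k =>
          by_cases hk : (k : ℕ) = 0
          · have : C.e (Sum.inl k) = C.x 1 := by simp [e, hk]
            rw [show C.bb (C.e (Sum.inl i)) (C.e (Sum.inl k))
                = C.bb (C.x ((i : ℕ) + 1)) (C.x 1) by rw [this]; rfl]
            rw [C.xstep i]
            by_cases h2 : (i : ℕ) + 2 ≤ C.n
            · rw [if_pos h2]
              exact le_sup_left (α := Submodule ℂ L) (C.x_mem_Xsp (by omega) (by omega) h2)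
            · rw [if_neg h2]; exact Submodule.zero_mem _
          · have h0 : C.bb (C.x ((i : ℕ) + 1)) (C.x ((k : ℕ) + 1)) = 0 :=
              C.hxxk _ _ (by omega) (by have := i.isLt; omega) (by omega)
                (by have := k.isLt; omega)
            rw [show C.bb (C.e (Sum.inl i)) (C.e (Sum.inl k))
                = C.bb (C.x ((i : ℕ) + 1)) (C.x ((k : ℕ) + 1)) from rfl, h0]
            exact Submodule.zero_mem _
      | inr j =>
          have : C.bb (C.e (Sum.inl i)) (C.e (Sum.inr j))
              = C.G ((i : ℕ) + 1) ((j : ℕ) + 1) :=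
            (C.G_eq (by omega) (by have := i.isLt; omega) (by omega)
              (by have := j.isLt; omega)).symm
          rw [this]
          exact le_sup_right (α := Submodule ℂ L) (C.G_in_Y2 _ _)
  | inr jj =>
      cases v with
      | inl k =>
          by_cases hk : (k : ℕ) = 0
          · have : C.e (Sum.inl k) = C.x 1 := by simp [e, hk]
            rw [show C.bb (C.e (Sum.inr jj)) (C.e (Sum.inl k))
                = C.bb (C.y ((jj : ℕ) + 1)) (C.x 1) by rw [this]; rfl]
            rw [C.ystep jj]
            by_cases h2 : (jj : ℕ) + 2 ≤ C.m
            · rw [if_pos h2]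
              exact le_sup_right (α := Submodule ℂ L) (C.y_mem_Ysp (by omega) (by omega) h2)
            · rw [if_neg h2]; exact Submodule.zero_mem _
          · have h0 : C.bb (C.y ((jj : ℕ) + 1)) (C.x ((k : ℕ) + 1)) = 0 :=
              C.hyxk _ _ (by omega) (by have := jj.isLt; omega) (by omega)
                (by have := k.isLt; omega)
            rw [show C.bb (C.e (Sum.inr jj)) (C.e (Sum.inl k))
                = C.bb (C.y ((jj : ℕ) + 1)) (C.x ((k : ℕ) + 1)) from rfl, h0]
            exact Submodule.zero_mem _
      | inr j =>
          have : C.bb (C.e (Sum.inr jj)) (C.e (Sum.inr j))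
              = C.Hh ((jj : ℕ) + 1) ((j : ℕ) + 1) :=
            (C.Hh_eq (by omega) (by have := jj.isLt; omega) (by omega)
              (by have := j.isLt; omega)).symm
          rw [this]
          exact le_sup_left (α := Submodule ℂ L) (C.H_in_X2 hs _ _)

lemma UU_le_term1 : C.UU ≤ C.S.term 1 := sup_le C.Xsp_le_term1 C.Ysp_le_term1

lemma term2_le_good (hs : ∀ k, C.sc k = 0) : C.S.term 2 ≤ C.VV := by
  have hUU : ∀ a ∈ Submodule.span ℂ ((C.x '' Set.Icc 2 C.n) ∪ (C.y '' Set.Icc 2 C.m)),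
      ∀ bz, C.bb a bz ∈ C.VV := by
    refine C.bracket_span_le ?_
    rintro a (⟨i, ⟨hi2, hin⟩, rfl⟩ | ⟨j, ⟨hj2, hjm⟩, rfl⟩)
    · refine C.bracket_all_basis ?_ ?_
      · intro k
        by_cases hk : (k : ℕ) = 0
        · rw [show C.x ((k : ℕ) + 1) = C.x 1 by rw [hk]]
          by_cases h2 : i + 1 ≤ C.n
          · rw [C.bxx1 i (by omega) (by omega)]
            exact le_sup_left (α := Submodule ℂ L) (C.x_mem_Xsp (by omega) (by omega) h2)
          · have : i = C.n := by omega
            subst this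
            rw [show C.bb (C.x C.n) (C.x 1) = 0 from C.hxn]
            exact Submodule.zero_mem _
        · rw [C.bxxk i ((k : ℕ) + 1) (by omega) hin (by omega) (by have := k.isLt; omega)]
          exact Submodule.zero_mem _
      · intro j
        rw [show C.bb (C.x i) (C.y ((j : ℕ) + 1)) = C.G i ((j : ℕ) + 1) from
          (C.G_eq (by omega) hin (by omega) (by have := j.isLt; omega)).symm]
        exact le_sup_right (α := Submodule ℂ L) (C.G_in_Y3 _ hi2)
    · refine C.bracket_all_basis ?_ ?_
      · intro k
        by_cases hk : (k : ℕ) = 0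
        · rw [show C.x ((k : ℕ) + 1) = C.x 1 by rw [hk]]
          by_cases h2 : j + 1 ≤ C.m
          · rw [C.byx1 j (by omega) (by omega)]
            exact le_sup_right (α := Submodule ℂ L) (C.y_mem_Ysp (by omega) (by omega) h2)
          · have : j = C.m := by omega
            subst this
            rw [show C.bb (C.y C.m) (C.x 1) = 0 from C.hym]
            exact Submodule.zero_mem _
        · rw [C.byxk j ((k : ℕ) + 1) (by omega) hjm (by omega) (by have := k.isLt; omega)]
          exact Submodule.zero_mem _
      · intro j'
        rw [show C.bb (C.y j) (C.y ((j' : ℕ) + 1)) = C.Hh j ((j' : ℕ) + 1) from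
          (C.Hh_eq (by omega) hjm (by omega) (by have := j'.isLt; omega)).symm]
        exact le_sup_left (α := Submodule ℂ L) (C.H_in_X2 hs _ _)
  show C.S.bracketSpan (C.S.term 1) ⊤ ≤ C.VV
  refine Submodule.span_le.mpr ?_
  rintro z ⟨a, ha, bz, -, rfl⟩
  have ha' : a ∈ C.UU := C.term1_le_good hs ha
  rw [UU, Xsp, Ysp, ← Submodule.span_union] at ha'
  exact hUU a ha' bz

lemma VV_eq_span :
    C.VV = Submodule.span ℂ ((C.x '' Set.Icc 2 C.n) ∪ (C.y '' Set.Icc 3 C.m)) := by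
  rw [VV, Xsp, Ysp, ← Submodule.span_union]

lemma finrank_VV_le [FiniteDimensional ℂ L] :
    Module.finrank ℂ C.VV ≤ C.n + C.m - 3 := by
  classical
  have hset : ((C.x '' Set.Icc 2 C.n) ∪ (C.y '' Set.Icc 3 C.m))
      = ((((Finset.Icc 2 C.n).image C.x) ∪ ((Finset.Icc 3 C.m).image C.y) : Finset L) : Set L) := by
    simp [Finset.coe_union, Finset.coe_image, Finset.coe_Icc]
  rw [C.VV_eq_span, hset]
  refine le_trans (finrank_span_finset_le_card _) ?_
  refine le_trans (Finset.card_union_le _ _) ?_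
  have h1 : ((Finset.Icc 2 C.n).image C.x).card ≤ C.n - 1 := by
    refine le_trans (Finset.card_image_le) ?_
    rw [Nat.card_Icc]; omega
  have h2 : ((Finset.Icc 3 C.m).image C.y).card ≤ C.m - 2 := by
    refine le_trans (Finset.card_image_le) ?_
    rw [Nat.card_Icc]; omega
  have := C.hn; have := C.hm
  omega

lemma y2_not_in_VV : C.y 2 ∉ C.VV := by
  intro hy2
  have hker : C.VV ≤ LinearMap.ker (C.φ C.q1) := by
    refine sup_le ?_ ?_
    · refine Submodule.span_le.mpr ?_
      rintro z ⟨i, ⟨hi2, hin⟩, rfl⟩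
      exact LinearMap.mem_ker.mpr (C.phi_of_L0 (C.hx0 i (by omega) hin) C.q1)
    · refine Submodule.span_le.mpr ?_
      rintro z ⟨j, ⟨hj3, hjm⟩, rfl⟩
      refine LinearMap.mem_ker.mpr ?_
      have : C.y j = C.y (((⟨j - 1, by omega⟩ : Fin C.m) : ℕ) + 1) := by
        show C.y j = C.y (j - 1 + 1)
        exact congrArg C.y (by omega)
      rw [this, C.phi_y]
      rw [if_neg (fun hcon => by
        apply congrArg Fin.val at hcon
        rw [show ((C.q1 : ℕ)) = 1 from rfl] at hcon
        simp at hcon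
        omega)]
  have h1 : C.φ C.q1 (C.y 2) = 1 := by
    have : C.y 2 = C.y (((C.q1 : Fin C.m) : ℕ) + 1) := rfl
    rw [this, C.phi_y, if_pos rfl]
  have := LinearMap.mem_ker.mp (hker hy2)
  rw [h1] at this
  exact one_ne_zero this

/-- The conclusion in the good case. -/
lemma good_case [FiniteDimensional ℂ L] (hs : ∀ k, C.sc k = 0) :
    C.S.term 2 = C.VV ∧ C.y 2 ∉ C.S.term 2 := by
  have hle := C.term2_le_good hs
  have hfr1 := C.finrank_VV_le
  have hfr2 : C.n + C.m - 3 ≤ Module.finrank ℂ (C.S.term 2) := by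
    have := C.finrank_term_ge (C.n + C.m - 4) 2 (by have := C.hn; have := C.hm; omega)
    have hn := C.hn; have hm := C.hm
    omega
  have heq : C.S.term 2 = C.VV :=
    Submodule.eq_of_le_of_finrank_le hle (le_trans hfr1 hfr2)
  exact ⟨heq, by rw [heq]; exact C.y2_not_in_VV⟩

/-- Right multiplication by `y₁`. -/
noncomputable def r1 : L →ₗ[ℂ] L := C.S.bracket.flip (C.y 1)

lemma r1_apply (z : L) : C.r1 z = C.bb z (C.y 1) := rfl

lemma x1_in_term1 {k : ℕ} (hk : C.sc k ≠ 0) : C.x 1 ∈ C.S.term 1 := by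
  have hm := C.hm; have hn := C.hn
  have hk1 : 1 ≤ k ∧ k ≤ C.m := by
    by_contra hcon
    apply hk
    rw [sc, C.Hh_zero (fun h => hcon ⟨h.1, h.2.1⟩), map_zero]
  have hmem : C.Hh k 1 ∈ C.S.term 1 := by
    rw [C.Hh_eq hk1.1 hk1.2 le_rfl (by omega)]
    exact C.bracket_mem_term (k := 0) Submodule.mem_top _
  have hexp := C.expand0 (C.Hh_mem0 k 1)
  rw [← Finset.add_sum_erase _ _ (Finset.mem_univ C.p0)] at hexp
  have hx1eq : C.sc k • C.x 1 = C.Hh k 1 -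
      ∑ p ∈ Finset.univ.erase C.p0, C.ψ p (C.Hh k 1) • C.x ((p : ℕ) + 1) := by
    rw [sc]
    rw [show C.x 1 = C.x (((C.p0 : Fin C.n) : ℕ) + 1) from rfl]
    rw [eq_sub_iff_add_eq, ← hexp]
  have hrest : (∑ p ∈ Finset.univ.erase C.p0, C.ψ p (C.Hh k 1) • C.x ((p : ℕ) + 1))
      ∈ C.S.term 1 := by
    refine Submodule.sum_mem _ fun p hp => Submodule.smul_mem _ _ ?_
    have hp0 : (p : ℕ) ≠ 0 := by
      intro h0
      exact (Finset.mem_erase.mp hp).1 (Fin.ext (show (p : ℕ) = ((C.p0 : ℕ)) by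
        rw [show ((C.p0 : ℕ)) = 0 from rfl]; omega))
    exact C.Xsp_le_term1 (C.x_mem_Xsp (by omega) (by omega) (by have := p.isLt; omega))
  have : C.sc k • C.x 1 ∈ C.S.term 1 := by
    rw [hx1eq]; exact Submodule.sub_mem _ hmem hrest
  have := Submodule.smul_mem _ (C.sc k)⁻¹ this
  rwa [inv_smul_smul₀ hk] at this

lemma decomp (hx1 : C.x 1 ∈ C.S.term 1) (bz : L) :
    bz - C.φ C.q0 bz • C.y 1 ∈ C.S.term 1 := by
  have hsplit := C.sum_split bz
  have hyterm : (∑ q ∈ Finset.univ.erase C.q0, C.φ q bz • C.y ((q : ℕ) + 1)) ∈ C.S.term 1 := by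
    refine Submodule.sum_mem _ fun q hq => Submodule.smul_mem _ _ ?_
    have hq0 : (q : ℕ) ≠ 0 := by
      intro h0
      exact (Finset.mem_erase.mp hq).1 (Fin.ext (show (q : ℕ) = ((C.q0 : ℕ)) by
        rw [show ((C.q0 : ℕ)) = 0 from rfl]; omega))
    exact C.Ysp_le_term1 (C.y_mem_Ysp (by omega) (by omega) (by have := q.isLt; omega))
  have hxterm : (∑ p : Fin C.n, C.ψ p bz • C.x ((p : ℕ) + 1)) ∈ C.S.term 1 := by
    refine Submodule.sum_mem _ fun p _ => Submodule.smul_mem _ _ ?_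
    by_cases hp0 : (p : ℕ) = 0
    · rw [show C.x ((p : ℕ) + 1) = C.x 1 by rw [hp0]]
      exact hx1
    · exact C.Xsp_le_term1 (C.x_mem_Xsp (by omega) (by omega) (by have := p.isLt; omega))
  have hEq : bz - C.φ C.q0 bz • C.y 1 = (∑ p : Fin C.n, C.ψ p bz • C.x ((p : ℕ) + 1)) +
      ∑ q ∈ Finset.univ.erase C.q0, C.φ q bz • C.y ((q : ℕ) + 1) := by
    have h2 : (∑ q : Fin C.m, C.φ q bz • C.y ((q : ℕ) + 1))
        = C.φ C.q0 bz • C.y 1 + ∑ q ∈ Finset.univ.erase C.q0, C.φ q bz • C.y ((q : ℕ) + 1) := by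
      rw [← Finset.add_sum_erase _ _ (Finset.mem_univ C.q0)]
      rfl
    nth_rewrite 1 [← hsplit]
    rw [h2]
    abel
  rw [hEq]
  exact Submodule.add_mem _ hxterm hyterm

/-- `[L^{k+1}, L²] ⊆ L^{k+3}`. -/
lemma bracket_term_term1 (k : ℕ) {a : L} (ha : a ∈ C.S.term k) {w : L}
    (hw : w ∈ C.S.term 1) : C.bb a w ∈ C.S.term (k + 2) := by
  have : C.S.term 1 ≤ Submodule.comap (C.S.bracket a) (C.S.term (k + 2)) := by
    refine C.term1_le fun u v => ?_
    have hu : C.e u ∈ C.S.L0 ∨ C.e u ∈ C.S.L1 := by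
      cases u with
      | inl i => exact Or.inl (C.hx0 _ (by omega) (by have := i.isLt; omega))
      | inr j => exact Or.inr (C.hy1 _ (by omega) (by have := j.isLt; omega))
    have hv : C.e v ∈ C.S.L0 ∨ C.e v ∈ C.S.L1 := by
      cases v with
      | inl i => exact Or.inl (C.hx0 _ (by omega) (by have := i.isLt; omega))
      | inr j => exact Or.inr (C.hy1 _ (by omega) (by have := j.isLt; omega))
    have h1 : C.S.bracket a (C.e u) ∈ C.S.term (k + 1) := C.bracket_mem_term ha _
    have h2 : C.S.bracket a (C.e v) ∈ C.S.term (k + 1) := C.bracket_mem_term ha _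
    have h3 : C.S.bracket (C.S.bracket a (C.e u)) (C.e v) ∈ C.S.term (k + 2) :=
      C.bracket_mem_term h1 _
    have h4 : C.S.bracket (C.S.bracket a (C.e v)) (C.e u) ∈ C.S.term (k + 2) :=
      C.bracket_mem_term h2 _
    refine Submodule.mem_comap.mpr ?_
    rcases hu with hu | hu <;> rcases hv with hv | hv
    · rw [C.S.leib00 a _ hu _ hv]; exact Submodule.sub_mem _ h3 h4
    · rw [C.S.leib01 a _ hu _ hv]; exact Submodule.sub_mem _ h3 h4
    · rw [C.S.leib10 a _ hu _ hv]; exact Submodule.sub_mem _ h3 h4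
    · rw [C.S.leib11 a _ hu _ hv]; exact Submodule.add_mem _ h3 h4
  exact Submodule.mem_comap.mp (this hw)

lemma term_step (hx1 : C.x 1 ∈ C.S.term 1) (k : ℕ) :
    C.S.term (k + 1) ≤ Submodule.map C.r1 (C.S.term k) ⊔ C.S.term (k + 2) := by
  show C.S.bracketSpan (C.S.term k) ⊤ ≤ _
  refine Submodule.span_le.mpr ?_
  rintro z ⟨a, ha, bz, -, rfl⟩
  have hw := C.decomp hx1 bz
  have hEq : C.S.bracket a bz = C.φ C.q0 bz • C.r1 a
      + C.bb a (bz - C.φ C.q0 bz • C.y 1) := by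
    rw [r1_apply]
    simp only [bb, map_sub, map_smul]
    abel
  rw [hEq]
  refine Submodule.add_mem _ ?_ ?_
  · exact Submodule.mem_sup_left (Submodule.smul_mem _ _
      (Submodule.mem_map_of_mem ha))
  · exact Submodule.mem_sup_right (C.bracket_term_term1 k ha hw)

lemma term_eq_map (hx1 : C.x 1 ∈ C.S.term 1) (k : ℕ) :
    C.S.term (k + 1) = Submodule.map C.r1 (C.S.term k) := by
  have hge : ∀ j, Submodule.map C.r1 (C.S.term j) ≤ C.S.term (j + 1) := by
    intro j
    rintro z ⟨a, ha, rfl⟩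
    exact C.bracket_mem_term ha _
  refine le_antisymm ?_ (hge k)
  have key : ∀ d k : ℕ, C.n + C.m - 1 ≤ k + 1 + d →
      C.S.term (k + 1) ≤ Submodule.map C.r1 (C.S.term k) := by
    intro d
    induction d with
    | zero =>
        intro k hk
        have : C.S.term (k + 1) ≤ C.S.term (C.n + C.m - 1) := C.term_antitone (by omega)
        rw [C.hnb] at this
        exact le_trans this bot_le
    | succ d ih =>
        intro k hk
        refine le_trans (C.term_step hx1 k) (sup_le le_rfl ?_)
        refine le_trans (ih (k + 1) (by omega)) ?_
        exact Submodule.map_mono (C.term_succ_le k)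
  exact key (C.n + C.m) k (by omega)

lemma r1_sq (z : L) : C.r1 (C.r1 z) = ((2 : ℂ)⁻¹ * C.sc 1) • C.bb z (C.x 1) := by
  have hm := C.hm; have hn := C.hn
  have hy1' : C.y 1 ∈ C.S.L1 := C.hy1 1 le_rfl (by omega)
  have hl := C.S.leib11 z (C.y 1) hy1' (C.y 1) hy1'
  have hH : C.S.bracket (C.y 1) (C.y 1) = C.Hh 1 1 := (C.Hh_eq le_rfl (by omega) le_rfl (by omega)).symm
  rw [hH] at hl
  have hexp : C.S.bracket z (C.Hh 1 1) = C.sc 1 • C.bb z (C.x 1) := by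
    conv_lhs => rw [C.expand0 (C.Hh_mem0 1 1)]
    rw [show (C.S.bracket z) (∑ p : Fin C.n, C.ψ p (C.Hh 1 1) • C.x ((p : ℕ) + 1))
        = ∑ p : Fin C.n, C.ψ p (C.Hh 1 1) • C.bb z (C.x ((p : ℕ) + 1)) by
      rw [map_sum]; exact Finset.sum_congr rfl fun p _ => by rw [map_smul]]
    have hoff : ∀ p ∈ Finset.univ, p ≠ C.p0 →
        C.ψ p (C.Hh 1 1) • C.bb z (C.x ((p : ℕ) + 1)) = 0 := by
      intro p _ hp
      have hp0 : (p : ℕ) ≠ 0 := by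
        intro h0
        exact hp (Fin.ext (show (p : ℕ) = ((C.p0 : ℕ)) by
          rw [show ((C.p0 : ℕ)) = 0 from rfl]; omega))
      rw [C.zkill (by omega) (by have := p.isLt; omega) z, smul_zero]
    exact Finset.sum_eq_single_of_mem C.p0 (Finset.mem_univ _) hoff
  rw [hexp] at hl
  have hgoal : C.bb (C.bb z (C.y 1)) (C.y 1) + C.bb (C.bb z (C.y 1)) (C.y 1)
      = C.sc 1 • C.bb z (C.x 1) := hl.symm
  have h2 : (2 : ℂ) • C.r1 (C.r1 z) = C.sc 1 • C.bb z (C.x 1) := by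
    rw [two_smul]
    exact hgoal
  have := congrArg (fun t => (2 : ℂ)⁻¹ • t) h2
  simp only [smul_smul] at this
  rw [← this]
  norm_num

lemma sc1_ne [FiniteDimensional ℂ L] (hx1 : C.x 1 ∈ C.S.term 1) : C.sc 1 ≠ 0 := by
  intro hsc
  have h2 : C.S.term 2 = Submodule.map C.r1 (Submodule.map C.r1 (C.S.term 0)) := by
    rw [C.term_eq_map hx1 1, C.term_eq_map hx1 0]
  have hz : ∀ z : L, C.r1 (C.r1 z) = 0 := by
    intro z; rw [C.r1_sq, hsc]; simp
  have hbot : C.S.term 2 = ⊥ := by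
    rw [h2]
    rw [Submodule.eq_bot_iff]
    rintro z ⟨a, ⟨w, -, rfl⟩, rfl⟩
    exact hz w
  exact C.term_ne (k := 2) (by have := C.hn; have := C.hm; omega) hbot

lemma top_le_sup1 : (⊤ : Submodule ℂ L) ≤ C.Xsp 1 ⊔ C.Ysp 1 := by
  rw [← C.hspan]
  refine Submodule.span_le.mpr ?_
  rintro z ⟨u, rfl⟩
  cases u with
  | inl i =>
      exact Submodule.mem_sup_left (C.x_mem_Xsp (by omega) (by omega) (by have := i.isLt; omega))
  | inr j =>
      exact Submodule.mem_sup_right (C.y_mem_Ysp (by omega) (by omega) (by have := j.isLt; omega))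

lemma term_2k (hx1 : C.x 1 ∈ C.S.term 1) (hc : ((2 : ℂ)⁻¹ * C.sc 1) ≠ 0) :
    ∀ k, C.S.term (2 * k) = C.Xsp (k + 1) ⊔ C.Ysp (k + 1) := by
  intro k
  induction k with
  | zero =>
      refine le_antisymm ?_ le_top
      exact le_trans le_top C.top_le_sup1
  | succ k ih =>
      have h1 : 2 * (k + 1) = (2 * k + 1) + 1 := by ring
      rw [h1, C.term_eq_map hx1, C.term_eq_map hx1, ih]
      refine le_antisymm ?_ ?_
      · rw [Submodule.map_sup, Submodule.map_sup]
        refine sup_le ?_ ?_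
        · rw [Xsp, Submodule.map_span, Submodule.map_span]
          refine le_trans (Submodule.span_le.mpr ?_) le_sup_left
          rintro z ⟨w, ⟨u, ⟨i, ⟨hi1, hi2⟩, rfl⟩, rfl⟩, rfl⟩
          show C.r1 (C.r1 (C.x i)) ∈ C.Xsp (k + 2)
          rw [C.r1_sq]
          by_cases hin : i + 1 ≤ C.n
          · rw [C.bxx1 i (by omega) (by omega)]
            exact Submodule.smul_mem _ _ (C.x_mem_Xsp (by omega) (by omega) hin)
          · have : i = C.n := by omega
            subst this
            rw [C.bxn, smul_zero]; exact Submodule.zero_mem _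
        · rw [Ysp, Submodule.map_span, Submodule.map_span]
          refine le_trans (Submodule.span_le.mpr ?_) le_sup_right
          rintro z ⟨w, ⟨u, ⟨j, ⟨hj1, hj2⟩, rfl⟩, rfl⟩, rfl⟩
          show C.r1 (C.r1 (C.y j)) ∈ C.Ysp (k + 2)
          rw [C.r1_sq]
          by_cases hjm : j + 1 ≤ C.m
          · rw [C.byx1 j (by omega) (by omega)]
            exact Submodule.smul_mem _ _ (C.y_mem_Ysp (by omega) (by omega) hjm)
          · have : j = C.m := by omega
            subst this
            rw [C.bym, smul_zero]; exact Submodule.zero_mem _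
      · refine sup_le ?_ ?_
        · refine Submodule.span_le.mpr ?_
          rintro z ⟨i, ⟨hi1, hi2⟩, rfl⟩
          have hmem : C.x (i - 1) ∈ C.Xsp (k + 1) ⊔ C.Ysp (k + 1) :=
            Submodule.mem_sup_left (C.x_mem_Xsp (by omega) (by omega) (by omega))
          have hmm : C.r1 (C.r1 (C.x (i - 1))) ∈
              Submodule.map C.r1 (Submodule.map C.r1 (C.Xsp (k + 1) ⊔ C.Ysp (k + 1))) :=
            Submodule.mem_map_of_mem (Submodule.mem_map_of_mem hmem)
          have heq : C.r1 (C.r1 (C.x (i - 1))) = ((2 : ℂ)⁻¹ * C.sc 1) • C.x i := by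
            rw [C.r1_sq, C.bxx1 (i - 1) (by omega) (by omega), show i - 1 + 1 = i by omega]
          have := Submodule.smul_mem _ ((2 : ℂ)⁻¹ * C.sc 1)⁻¹ hmm
          rwa [heq, inv_smul_smul₀ hc] at this
        · refine Submodule.span_le.mpr ?_
          rintro z ⟨j, ⟨hj1, hj2⟩, rfl⟩
          have hmem : C.y (j - 1) ∈ C.Xsp (k + 1) ⊔ C.Ysp (k + 1) :=
            Submodule.mem_sup_right (C.y_mem_Ysp (by omega) (by omega) (by omega))
          have hmm : C.r1 (C.r1 (C.y (j - 1))) ∈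
              Submodule.map C.r1 (Submodule.map C.r1 (C.Xsp (k + 1) ⊔ C.Ysp (k + 1))) :=
            Submodule.mem_map_of_mem (Submodule.mem_map_of_mem hmem)
          have heq : C.r1 (C.r1 (C.y (j - 1))) = ((2 : ℂ)⁻¹ * C.sc 1) • C.y j := by
            rw [C.r1_sq, C.byx1 (j - 1) (by omega) (by omega), show j - 1 + 1 = j by omega]
          have := Submodule.smul_mem _ ((2 : ℂ)⁻¹ * C.sc 1)⁻¹ hmm
          rwa [heq, inv_smul_smul₀ hc] at this

lemma x_ne {i : ℕ} (h1 : 1 ≤ i) (h2 : i ≤ C.n) : C.x i ≠ 0 := by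
  intro h0
  apply C.hli.ne_zero (Sum.inl (⟨i - 1, by omega⟩ : Fin C.n))
  show C.x (i - 1 + 1) = 0
  rwa [show i - 1 + 1 = i by omega]

lemma y_ne {j : ℕ} (h1 : 1 ≤ j) (h2 : j ≤ C.m) : C.y j ≠ 0 := by
  intro h0
  apply C.hli.ne_zero (Sum.inr (⟨j - 1, by omega⟩ : Fin C.m))
  show C.y (j - 1 + 1) = 0
  rwa [show j - 1 + 1 = j by omega]

lemma finrank_Ysp2_le [FiniteDimensional ℂ L] :
    Module.finrank ℂ (C.Ysp 2) ≤ C.m - 1 := by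
  classical
  have hset : (C.y '' Set.Icc 2 C.m) = (((Finset.Icc 2 C.m).image C.y : Finset L) : Set L) := by
    simp [Finset.coe_image, Finset.coe_Icc]
  rw [Ysp, hset]
  refine le_trans (finrank_span_finset_le_card _) ?_
  refine le_trans (Finset.card_image_le) ?_
  rw [Nat.card_Icc]; omega

lemma bad_case [FiniteDimensional ℂ L] (hex : ∃ k, C.sc k ≠ 0) : False := by
  classical
  have hn := C.hn; have hm := C.hm
  obtain ⟨k0, hk0⟩ := hex
  have hx1 : C.x 1 ∈ C.S.term 1 := C.x1_in_term1 hk0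
  have hsc1 : C.sc 1 ≠ 0 := C.sc1_ne hx1
  set c : ℂ := (2 : ℂ)⁻¹ * C.sc 1 with hcdef
  have hc : c ≠ 0 := mul_ne_zero (by norm_num) hsc1
  have h2k := C.term_2k hx1 hc
  rcases lt_trichotomy C.n C.m with hlt | heq | hgt
  · -- n < m : y_m survives at level 2(m-1) ≥ n+m-1
    have e1 := h2k (C.m - 1)
    rw [show C.m - 1 + 1 = C.m by omega] at e1
    have hble : C.S.term (2 * (C.m - 1)) ≤ C.S.term (C.n + C.m - 1) :=
      C.term_antitone (by omega)
    have hmem : C.y C.m ∈ C.S.term (2 * (C.m - 1)) := by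
      rw [e1]; exact Submodule.mem_sup_right (C.y_mem_Ysp le_rfl (by omega) le_rfl)
    have := hble hmem
    rw [C.hnb, Submodule.mem_bot] at this
    exact C.y_ne (by omega) le_rfl this
  · -- n = m
    have e1 := h2k (C.n - 1)
    rw [show C.n - 1 + 1 = C.n by omega] at e1
    have e2 : C.S.term (2 * (C.n - 1) + 1) = ⊥ := by
      rw [show 2 * (C.n - 1) + 1 = C.n + C.m - 1 by omega, C.hnb]
    have hynm : C.y C.n ∈ C.S.term (2 * (C.n - 1)) := by
      rw [e1]
      exact Submodule.mem_sup_right (C.y_mem_Ysp (by omega) (by omega) (by omega))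
    have hr1yn : C.r1 (C.y C.n) = 0 := by
      have hmm : C.r1 (C.y C.n) ∈ C.S.term (2 * (C.n - 1) + 1) := by
        rw [C.term_eq_map hx1]
        exact Submodule.mem_map_of_mem hynm
      rwa [e2, Submodule.mem_bot] at hmm
    -- the family v_i = [x_{i+1}, y_1]
    set v : Fin (C.n - 1) → L := fun i => C.r1 (C.x ((i : ℕ) + 1)) with hvdef
    have hv : ∀ i : Fin (C.n - 1), C.r1 (v i) = c • C.x ((i : ℕ) + 2) := by
      intro i
      rw [hvdef]
      simp only []
      rw [C.r1_sq, C.bxx1 ((i : ℕ) + 1) (by omega) (by have := i.isLt; omega)]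
    have xind : LinearIndependent ℂ (fun i : Fin (C.n - 1) => C.x ((i : ℕ) + 2)) := by
      have hinj : Function.Injective (fun i : Fin (C.n - 1) =>
          (Sum.inl ⟨(i : ℕ) + 1, by have := i.isLt; omega⟩ : Fin C.n ⊕ Fin C.m)) := by
        intro a b hab
        simp only [Sum.inl.injEq, Fin.mk.injEq, Nat.add_right_cancel_iff] at hab
        exact Fin.ext hab
      exact C.hli.comp _ hinj
    have wind : LinearIndependent ℂ (fun i : Fin (C.n - 1) => c • C.x ((i : ℕ) + 2)) := by
      have := xind.units_smul (fun _ => Units.mk0 c hc)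
      convert this using 1
      funext i; rfl
    have vind : LinearIndependent ℂ v := by
      apply LinearIndependent.of_comp C.r1
      have hcomp : (⇑C.r1 ∘ v) = fun i : Fin (C.n - 1) => c • C.x ((i : ℕ) + 2) :=
        funext fun i => hv i
      rw [hcomp]; exact wind
    have hfin : Module.finrank ℂ (Submodule.span ℂ (Set.range v)) = C.n - 1 := by
      rw [finrank_span_eq_card vind, Fintype.card_fin]
    have hle : Submodule.span ℂ (Set.range v) ≤ C.Ysp 2 := by
      refine Submodule.span_le.mpr ?_
      rintro z ⟨i, rfl⟩
      have : v i = C.G ((i : ℕ) + 1) 1 := by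
        rw [hvdef]
        simp only []
        rw [r1_apply, C.G_eq (by omega) (by have := i.isLt; omega) le_rfl (by omega)]
      rw [this]
      exact C.G_in_Y2 _ _
    have heqspan : Submodule.span ℂ (Set.range v) = C.Ysp 2 := by
      refine Submodule.eq_of_le_of_finrank_le hle ?_
      rw [hfin]
      refine le_trans C.finrank_Ysp2_le (by omega)
    have hyn2 : C.y C.n ∈ Submodule.span ℂ (Set.range v) := by
      rw [heqspan]
      exact C.y_mem_Ysp (by omega) (by omega) (by omega)
    obtain ⟨coef, hcoef⟩ := (mem_span_range_iff_exists_fun ℂ).mp hyn2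
    have h0 : ∑ i : Fin (C.n - 1), (coef i * c) • C.x ((i : ℕ) + 2) = 0 := by
      have := congrArg (⇑C.r1) hcoef
      rw [map_sum, hr1yn] at this
      calc ∑ i : Fin (C.n - 1), (coef i * c) • C.x ((i : ℕ) + 2)
          = ∑ i : Fin (C.n - 1), C.r1 (coef i • v i) := by
            refine Finset.sum_congr rfl fun i _ => ?_
            rw [map_smul, hv i, smul_smul]
        _ = 0 := this
    have hcz : ∀ i, coef i = 0 := by
      have := Fintype.linearIndependent_iff.mp xind (fun i => coef i * c) h0
      intro i
      have h' := this i
      exact (mul_eq_zero.mp h').resolve_right hc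
    have hyzero : C.y C.n = 0 := by
      rw [← hcoef]
      refine Finset.sum_eq_zero fun i _ => ?_
      rw [hcz i, zero_smul]
    exact C.y_ne (by omega) (by omega) hyzero
  · -- n > m : x_n survives at level 2(n-1) ≥ n+m-1
    have e1 := h2k (C.n - 1)
    rw [show C.n - 1 + 1 = C.n by omega] at e1
    have hble : C.S.term (2 * (C.n - 1)) ≤ C.S.term (C.n + C.m - 1) :=
      C.term_antitone (by omega)
    have hmem : C.x C.n ∈ C.S.term (2 * (C.n - 1)) := by
      rw [e1]; exact Submodule.mem_sup_left (C.x_mem_Xsp le_rfl (by omega) le_rfl)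
    have := hble hmem
    rw [C.hnb, Submodule.mem_bot] at this
    exact C.x_ne (by omega) le_rfl this

end Ctx
end ZFAux

open LeibnizSuper in
/-- In a zero-filiform Leibniz superalgebra `L ∈ ZF^{n,m}` (`n, m ≥ 3`) of nilindex
`n+m` with adapted basis, `L³` equals the span of `{x₂,…,x_n, y₃,…,y_m}`; in
particular `y₂ ∉ L³`. -/
theorem term_two_eq_span {L : Type*} [AddCommGroup L] [Module ℂ L]
    [FiniteDimensional ℂ L] (S : LeibnizSuper L) (n m : ℕ)
    (hn : 3 ≤ n) (hm : 3 ≤ m) (hzf : S.ZeroFiliform n m)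
    (hnil : S.HasNilindex (n + m))
    (x y : ℕ → L) (hadapt : S.IsAdaptedPair n m x y) :
    S.term 2 = Submodule.span ℂ ((x '' Set.Icc 2 n) ∪ (y '' Set.Icc 3 m)) ∧
      y 2 ∉ S.term 2 := by
  obtain ⟨hx0, hy1, hli, hspan, hxx1, hxn, hxxk, hyx1, hym, hyxk⟩ := hadapt
  obtain ⟨-, hnb, hnt⟩ := hnil
  let C : ZFAux.Ctx L :=
    ⟨S, n, m, hn, hm, x, y, hx0, hy1, hli, hspan, hxx1, hxn, hxxk, hyx1, hym, hyxk, hnb, hnt⟩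
  by_cases hs : ∀ k, C.sc k = 0
  · have h := C.good_case hs
    rw [C.VV_eq_span] at h
    exact h
  · exact absurd (C.bad_case (not_forall.mp hs)) not_false
end

section
/- Let L be a complex Leibniz superalgebra of nilindex n+m with characteristic sequence C(L) = (n | m₁, m₂, …, m_k), where n = dim L₀, m = m₁+⋯+m_k = dim L₁ and m₁ ≤ m−2. Then L cannot be generated by two elements both belonging to the odd part L₁; i.e., there do not exist y, y′ ∈ L₁ such that the graded subalgebra generated by {y, y′} is all of L. -/
set_option linter.unusedSectionVars false
set_option maxHeartbeats 1000000

namespace JordanAux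

open Module LinearMap Submodule

variable {V : Type*} [AddCommGroup V] [Module ℂ V] [FiniteDimensional ℂ V]
variable (f : Module.End ℂ V)

/-- rank sequence -/
noncomputable def rk (j : ℕ) : ℕ := finrank ℂ (LinearMap.range (f ^ j))

lemma pow_succ_comp (j : ℕ) : f ^ (j+1) = f ∘ₗ f ^ j := by
  rw [pow_succ']; rfl

lemma range_pow_succ (j : ℕ) :
    LinearMap.range (f ^ (j+1)) = Submodule.map f (LinearMap.range (f ^ j)) := by
  rw [pow_succ_comp, LinearMap.range_comp]

lemma range_pow_le (j : ℕ) : LinearMap.range (f ^ (j+1)) ≤ LinearMap.range (f ^ j) := by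
  rw [pow_succ, Module.End.mul_eq_comp]
  exact LinearMap.range_comp_le_range f (f ^ j)

lemma rk_anti : Antitone (rk f) := by
  apply antitone_nat_of_succ_le
  intro j
  exact Submodule.finrank_mono (range_pow_le f j)

/-- drop at level j equals dim of intersection with kernel -/
lemma rk_drop (p : Submodule ℂ V) :
    finrank ℂ p = finrank ℂ (Submodule.map f p) + finrank ℂ ↥(p ⊓ LinearMap.ker f) := by
  have h := LinearMap.finrank_range_add_finrank_ker (f ∘ₗ p.subtype)
  rw [LinearMap.range_comp, Submodule.range_subtype] at h
  rw [LinearMap.ker_comp] at h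
  have h2 : finrank ℂ ↥(Submodule.comap p.subtype (LinearMap.ker f)) = finrank ℂ ↥(p ⊓ LinearMap.ker f) := by
    rw [← Submodule.map_comap_subtype]
    exact (Submodule.finrank_map_subtype_eq p _).symm
  rw [h2] at h
  have h3 : finrank ℂ p = finrank ℂ V - ((finrank ℂ V - finrank ℂ p)) := by
    have := Submodule.finrank_le p
    omega
  omega

noncomputable def dk (j : ℕ) : ℕ := rk f j - rk f (j+1)

lemma dk_eq (j : ℕ) :
    dk f j = finrank ℂ ↥(LinearMap.range (f ^ j) ⊓ LinearMap.ker f) := by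
  have := rk_drop f (LinearMap.range (f ^ j))
  rw [← range_pow_succ] at this
  unfold dk rk
  omega

lemma dk_anti : Antitone (dk f) := by
  apply antitone_nat_of_succ_le
  intro j
  rw [dk_eq, dk_eq]
  exact Submodule.finrank_mono (inf_le_inf_right _ (range_pow_le f j))

lemma rk_stationary {j : ℕ} (h : rk f (j+1) = rk f j) : ∀ k, j ≤ k → rk f k = rk f j := by
  have hr : LinearMap.range (f ^ (j+1)) = LinearMap.range (f ^ j) :=
    Submodule.eq_of_le_of_finrank_le (range_pow_le f j) (le_of_eq h.symm)
  have key : ∀ i, LinearMap.range (f ^ (j+i)) = LinearMap.range (f ^ j) := by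
    intro i
    induction i with
    | zero => rfl
    | succ i ih =>
      have : j + (i+1) = (j+i) + 1 := by omega
      rw [this, range_pow_succ, ih, ← range_pow_succ, hr]
  intro k hk
  obtain ⟨i, rfl⟩ := Nat.exists_eq_add_of_le hk
  unfold rk; rw [key]

variable {N K : ℕ}

lemma rk_strict (hN : f ^ N = 0) {j : ℕ} (hj : 0 < rk f j) : rk f (j+1) < rk f j := by
  have h0 : rk f N = 0 := by
    unfold rk; rw [hN]; simp [LinearMap.range_zero, finrank_bot]
  rcases lt_or_eq_of_le (rk_anti f (Nat.le_succ j)) with h | h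
  · exact h
  · exfalso
    rcases le_or_gt j N with hle | hlt
    · have := rk_stationary f h N hle; omega
    · have := rk_anti f (le_of_lt hlt); omega

lemma rk_pos (hK : f ^ K ≠ 0) {j : ℕ} (hj : j ≤ K) : 0 < rk f j := by
  have h1 : 0 < rk f K := by
    by_contra h
    push_neg at h
    have : rk f K = 0 := by omega
    have : LinearMap.range (f ^ K) = ⊥ := Submodule.finrank_eq_zero.mp this
    exact hK (LinearMap.range_eq_bot.mp this)
  exact lt_of_lt_of_le h1 (rk_anti f hj)

lemma dk_pos (hN : f ^ N = 0) (hK : f ^ K ≠ 0) {j : ℕ} (hj : j ≤ K) : 0 < dk f j := by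
  have := rk_strict f hN (rk_pos f hK hj)
  unfold dk; omega

lemma dk_zero (hN : f ^ N = 0) {j : ℕ} (hj : N ≤ j) : dk f j = 0 := by
  have h0 : rk f N = 0 := by
    unfold rk; rw [hN]; simp [LinearMap.range_zero, finrank_bot]
  have h1 : rk f j = 0 := by
    have := rk_anti f hj; omega
  have h2 : rk f (j+1) = 0 := by
    have : rk f (j+1) ≤ rk f N := rk_anti f (by omega); omega
  unfold dk; omega

/-- block length function -/
noncomputable def blk (j : ℕ) (i : ℕ) : ℕ :=
  ((Finset.range j).filter (fun t => i < dk f t)).card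

lemma blk_anti (j : ℕ) : ∀ {i i' : ℕ}, i ≤ i' → blk f j i' ≤ blk f j i := by
  intro i i' h
  apply Finset.card_le_card
  intro t ht
  simp only [Finset.mem_filter] at *
  exact ⟨ht.1, by omega⟩

lemma blk_iff (hN : f ^ N = 0) (i j : ℕ) :
    j + 1 ≤ blk f N i ↔ i < dk f j := by
  constructor
  · intro h
    by_contra hc
    push_neg at hc
    have hsub : ((Finset.range N).filter (fun t => i < dk f t)) ⊆ Finset.range j := by
      intro t ht
      simp only [Finset.mem_filter, Finset.mem_range] at *
      by_contra htj
      push_neg at htj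
      have := dk_anti f htj
      omega
    have := Finset.card_le_card hsub
    rw [Finset.card_range] at this
    unfold blk at h
    omega
  · intro h
    have hjN : j < N := by
      by_contra hc
      push_neg at hc
      have := dk_zero f hN hc
      omega
    have hsub : Finset.range (j+1) ⊆ (Finset.range N).filter (fun t => i < dk f t) := by
      intro t ht
      simp only [Finset.mem_filter, Finset.mem_range] at *
      constructor
      · omega
      · have : dk f j ≤ dk f t := dk_anti f (by omega)
        omega
    have := Finset.card_le_card hsub
    rw [Finset.card_range] at this
    unfold blk
    omega

lemma countP_range_lt (t : ℕ) : ∀ k : ℕ, (List.range k).countP (fun i => decide (i < t)) = min t k := by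
  intro k
  induction k with
  | zero => simp
  | succ k ih =>
    rw [List.range_succ, List.countP_append, ih]
    simp only [List.countP_cons, List.countP_nil]
    by_cases h : k < t
    · simp [h]; omega
    · simp [h]; omega

noncomputable def jlist (N' : ℕ) : List ℕ := (List.range (dk f 0)).map (blk f N')

lemma jordan_exists (hN : f ^ N = 0) (hK : f ^ K ≠ 0) :
    ∃ ls : List ℕ, HasJordanType f ls ∧ K + 1 ≤ ls.headI := by
  have hNpos : 0 < N := by
    rcases Nat.eq_zero_or_pos N with h | h
    · exfalso; rw [h, pow_zero] at hN
      have : f ^ K = 0 := by rw [← mul_one (f ^ K), hN, mul_zero]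
      exact hK this
    · exact h
  refine ⟨jlist f N, ⟨?_, ?_, ?_⟩, ?_⟩
  · -- sorted
    unfold jlist
    rw [List.pairwise_map]
    have := List.pairwise_lt_range (n := dk f 0)
    apply List.Pairwise.imp_of_mem (l := List.range (dk f 0)) ?_ this
    intro a b _ _ hab
    exact blk_anti f N (le_of_lt hab)
  · -- positive
    intro a ha
    unfold jlist at ha
    rw [List.mem_map] at ha
    obtain ⟨i, hi, rfl⟩ := ha
    rw [List.mem_range] at hi
    have : 0 + 1 ≤ blk f N i := (blk_iff f hN i 0).mpr hi
    omega
  · -- countP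
    intro j
    unfold jlist
    rw [List.countP_map]
    have hcong : ∀ i ∈ List.range (dk f 0),
        (((fun a => decide (j + 1 ≤ a)) ∘ blk f N) i = true ↔ (fun i => decide (i < dk f j)) i = true) := by
      intro i _
      simp only [Function.comp, decide_eq_true_eq]
      exact blk_iff f hN i j
    rw [List.countP_congr hcong, countP_range_lt]
    have h1 : dk f j ≤ dk f 0 := dk_anti f (Nat.zero_le j)
    rw [min_eq_left h1]
    rfl
  · -- headI
    have h0 : 0 < dk f 0 := dk_pos f hN hK (Nat.zero_le K)
    have hhead : (jlist f N).headI = blk f N 0 := by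
      unfold jlist
      obtain ⟨c, hc⟩ : ∃ c, dk f 0 = c + 1 := ⟨dk f 0 - 1, by omega⟩
      rw [hc, List.range_succ_eq_map]
      rfl
    rw [hhead]
    exact (blk_iff f hN 0 K).mpr (dk_pos f hN hK (le_refl K))

end JordanAux


namespace LeibnizSuper

variable {L : Type*} [AddCommGroup L] [Module ℂ L] (S : LeibnizSuper L)

lemma bracket_mem_bracketSpan {p q : Submodule ℂ L} {a b : L} (ha : a ∈ p) (hb : b ∈ q) :
    S.bracket a b ∈ S.bracketSpan p q :=
  Submodule.subset_span ⟨a, ha, b, hb, rfl⟩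

lemma bracketSpan_le {p q r : Submodule ℂ L} (h : ∀ a ∈ p, ∀ b ∈ q, S.bracket a b ∈ r) :
    S.bracketSpan p q ≤ r := by
  apply Submodule.span_le.mpr
  rintro z ⟨a, ha, b, hb, rfl⟩
  exact h a ha b hb

lemma bracketSpan_mono {p q p' q' : Submodule ℂ L} (hp : p ≤ p') (hq : q ≤ q') :
    S.bracketSpan p q ≤ S.bracketSpan p' q' :=
  S.bracketSpan_le fun a ha b hb => S.bracket_mem_bracketSpan (hp ha) (hq hb)

lemma term_succ (k : ℕ) : S.term (k+1) = S.bracketSpan (S.term k) ⊤ := rfl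

lemma bracket_mem_term_succ {k : ℕ} {a b : L} (ha : a ∈ S.term k) :
    S.bracket a b ∈ S.term (k+1) :=
  S.bracket_mem_bracketSpan ha Submodule.mem_top

lemma term_succ_le (k : ℕ) : S.term (k+1) ≤ S.term k := by
  induction k with
  | zero => exact le_top
  | succ k ih =>
    rw [term_succ, term_succ]
    exact S.bracketSpan_mono ih (le_refl _)

lemma term_antitone : Antitone S.term :=
  antitone_nat_of_succ_le S.term_succ_le

lemma term_le_of_le {j k : ℕ} (h : j ≤ k) : S.term k ≤ S.term j := S.term_antitone h

lemma top_graded : (⊤ : Submodule ℂ L) = S.L0 ⊔ S.L1 := S.compl.codisjoint.eq_top.symm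

lemma grade_zero {v : L} (h0 : v ∈ S.L0) (h1 : v ∈ S.L1) : v = 0 :=
  Submodule.disjoint_def.mp S.compl.disjoint v h0 h1

lemma term_graded (k : ℕ) : S.term k = S.term k ⊓ S.L0 ⊔ S.term k ⊓ S.L1 := by
  refine le_antisymm ?_ (sup_le inf_le_left inf_le_left)
  induction k with
  | zero =>
    intro v _
    have hv : v ∈ S.L0 ⊔ S.L1 := by rw [← S.top_graded]; trivial
    obtain ⟨v0, h0, v1, h1, rfl⟩ := Submodule.mem_sup.mp hv
    exact Submodule.add_mem _
      (Submodule.mem_sup_left ⟨Submodule.mem_top, h0⟩)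
      (Submodule.mem_sup_right ⟨Submodule.mem_top, h1⟩)
  | succ k ih =>
    rw [term_succ]
    apply S.bracketSpan_le
    intro a ha b _
    have hag := ih ha
    obtain ⟨a0, ha0, a1, ha1, rfl⟩ := Submodule.mem_sup.mp hag
    have hbg : b ∈ S.L0 ⊔ S.L1 := by rw [← S.top_graded]; trivial
    obtain ⟨b0, hb0, b1, hb1, rfl⟩ := Submodule.mem_sup.mp hbg
    have expand : S.bracket (a0 + a1) (b0 + b1) =
        S.bracket a0 b0 + S.bracket a0 b1 + (S.bracket a1 b0 + S.bracket a1 b1) := by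
      simp only [map_add, LinearMap.add_apply]; abel
    rw [expand]
    have ha0k : a0 ∈ S.term k := ha0.1
    have ha1k : a1 ∈ S.term k := ha1.1
    have m00 : S.bracket a0 b0 ∈ S.term (k+1) ⊓ S.L0 :=
      ⟨S.bracket_mem_term_succ ha0k, S.g00 a0 ha0.2 b0 hb0⟩
    have m01 : S.bracket a0 b1 ∈ S.term (k+1) ⊓ S.L1 :=
      ⟨S.bracket_mem_term_succ ha0k, S.g01 a0 ha0.2 b1 hb1⟩
    have m10 : S.bracket a1 b0 ∈ S.term (k+1) ⊓ S.L1 :=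
      ⟨S.bracket_mem_term_succ ha1k, S.g10 a1 ha1.2 b0 hb0⟩
    have m11 : S.bracket a1 b1 ∈ S.term (k+1) ⊓ S.L0 :=
      ⟨S.bracket_mem_term_succ ha1k, S.g11 a1 ha1.2 b1 hb1⟩
    exact Submodule.add_mem _
      (Submodule.add_mem _ (Submodule.mem_sup_left m00) (Submodule.mem_sup_right m01))
      (Submodule.add_mem _ (Submodule.mem_sup_right m10) (Submodule.mem_sup_left m11))

/-- `[L^{j+1}, L^{k+1}] ⊆ L^{j+k+2}` -/
lemma bracketSpan_term_term : ∀ (k j : ℕ), S.bracketSpan (S.term j) (S.term k) ≤ S.term (j+k+1) := by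
  intro k
  induction k with
  | zero =>
    intro j
    exact le_of_eq (S.term_succ j).symm
  | succ k ih =>
    intro j
    apply S.bracketSpan_le
    intro a ha b hb
    rw [term_succ] at hb
    unfold bracketSpan at hb
    induction hb using Submodule.span_induction with
    | mem z hz =>
      obtain ⟨u, hu, v, _, rfl⟩ := hz
      -- decompose u and v into graded pieces
      obtain ⟨u0, hu0, u1, hu1, rfl⟩ := Submodule.mem_sup.mp ((S.term_graded k) ▸ hu)
      have hvg : v ∈ S.L0 ⊔ S.L1 := by rw [← S.top_graded]; trivial
      obtain ⟨v0, hv0, v1, hv1, rfl⟩ := Submodule.mem_sup.mp hvg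
      have expand : S.bracket (u0 + u1) (v0 + v1) =
          S.bracket u0 v0 + S.bracket u0 v1 + (S.bracket u1 v0 + S.bracket u1 v1) := by
        simp only [map_add, LinearMap.add_apply]; abel
      rw [expand]
      simp only [map_add]
      have key : ∀ (u' v' : L), u' ∈ S.term k →
          (S.bracket a (S.bracket u' v') = S.bracket (S.bracket a u') v' - S.bracket (S.bracket a v') u' ∨
           S.bracket a (S.bracket u' v') = S.bracket (S.bracket a u') v' + S.bracket (S.bracket a v') u') →
          S.bracket a (S.bracket u' v') ∈ S.term (j + (k+1) + 1) := by
        intro u' v' hu' hleib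
        have t1 : S.bracket (S.bracket a u') v' ∈ S.term (j + (k+1) + 1) := by
          have h1 : S.bracket a u' ∈ S.term (j+k+1) :=
            ih j (S.bracket_mem_bracketSpan ha hu')
          have := S.bracket_mem_term_succ (b := v') h1
          convert this using 2 <;> omega
        have t2 : S.bracket (S.bracket a v') u' ∈ S.term (j + (k+1) + 1) := by
          have h1 : S.bracket a v' ∈ S.term (j+1) :=
            S.bracket_mem_term_succ (b := v') ha
          have := ih (j+1) (S.bracket_mem_bracketSpan h1 hu')
          convert this using 2 <;> omega
        rcases hleib with h | h
        · rw [h]; exact Submodule.sub_mem _ t1 t2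
        · rw [h]; exact Submodule.add_mem _ t1 t2
      refine Submodule.add_mem _ (Submodule.add_mem _ ?_ ?_) (Submodule.add_mem _ ?_ ?_)
      · exact key u0 v0 hu0.1 (Or.inl (S.leib00 a u0 hu0.2 v0 hv0))
      · exact key u0 v1 hu0.1 (Or.inl (S.leib01 a u0 hu0.2 v1 hv1))
      · exact key u1 v0 hu1.1 (Or.inl (S.leib10 a u1 hu1.2 v0 hv0))
      · exact key u1 v1 hu1.1 (Or.inr (S.leib11 a u1 hu1.2 v1 hv1))
    | zero => rw [map_zero]; exact Submodule.zero_mem _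
    | add z w _ _ hz hw =>
      rw [map_add]; exact Submodule.add_mem _ hz hw
    | smul c z _ hz =>
      rw [map_smul]; exact Submodule.smul_mem _ c hz

lemma term_stationary {k : ℕ} (h : S.term (k+1) = S.term k) :
    ∀ j, k ≤ j → S.term j = S.term k := by
  intro j hj
  obtain ⟨i, rfl⟩ := Nat.exists_eq_add_of_le hj
  induction i with
  | zero => rfl
  | succ i ih =>
    have heq : k + (i+1) = (k+i) + 1 := by omega
    rw [heq, term_succ, ih (Nat.le_add_right k i), ← term_succ, h]

lemma term_lt {K k : ℕ} (hbot : S.term K = ⊥) (hne : S.term k ≠ ⊥) :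
    S.term (k+1) < S.term k := by
  rcases lt_or_eq_of_le (S.term_succ_le k) with h | h
  · exact h
  · exfalso
    rcases le_or_gt k K with hle | hlt
    · have := S.term_stationary h K hle
      rw [this] at hbot
      exact hne hbot
    · have : S.term k ≤ S.term K := S.term_le_of_le (le_of_lt hlt)
      rw [hbot] at this
      exact hne (le_bot_iff.mp this)

section OddGen

variable {L : Type*} [AddCommGroup L] [Module ℂ L] (S : LeibnizSuper L)
variable (y y' : L)

lemma R_apply (w v : L) : S.R w v = S.bracket v w := rfl

omit [Module ℂ L] in
lemma dummy_omit : True := trivial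

lemma top_eq_span_sup (hy : y ∈ S.L1) (hy' : y' ∈ S.L1) (hgen : S.Generates {y, y'}) :
    (⊤ : Submodule ℂ L) = Submodule.span ℂ {y, y'} ⊔ S.term 1 := by
  set p := Submodule.span ℂ {y, y'} ⊔ S.term 1 with hp
  have hspan_le_L1 : Submodule.span ℂ {y, y'} ≤ S.L1 := by
    apply Submodule.span_le.mpr
    rintro z hz
    rcases Set.mem_insert_iff.mp hz with rfl | hz
    · exact hy
    · rw [Set.mem_singleton_iff.mp hz]; exact hy'
  have hgraded : S.IsGradedSubalgebra p := by
    constructor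
    · intro a _ b _
      exact le_sup_right (α := Submodule ℂ L) (S.bracket_mem_term_succ (k := 0) Submodule.mem_top)
    · refine le_antisymm ?_ (sup_le inf_le_left inf_le_left)
      intro v hv
      obtain ⟨s, hs, t, ht, rfl⟩ := Submodule.mem_sup.mp hv
      obtain ⟨t0, ht0, t1, ht1, rfl⟩ := Submodule.mem_sup.mp ((S.term_graded 1) ▸ ht)
      have h1 : t0 ∈ p ⊓ S.L0 := ⟨le_sup_right (α := Submodule ℂ L) ht0.1, ht0.2⟩
      have h2 : s + t1 ∈ p ⊓ S.L1 := by
        refine ⟨Submodule.add_mem _ (le_sup_left (α := Submodule ℂ L) hs)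
          (le_sup_right (α := Submodule ℂ L) ht1.1), Submodule.add_mem _ (hspan_le_L1 hs) ht1.2⟩
      refine Submodule.mem_sup.mpr ⟨t0, h1, s + t1, h2, by abel⟩
  exact (hgen p hgraded (Submodule.subset_span.trans (le_sup_left : _ ≤ p))).symm

lemma term_gen (hy : y ∈ S.L1) (hy' : y' ∈ S.L1) (hgen : S.Generates {y, y'}) (k : ℕ) :
    S.term (k+1) = (S.term k).map (S.R y) ⊔ (S.term k).map (S.R y') ⊔ S.term (k+2) := by
  refine le_antisymm ?_ ?_
  · rw [term_succ]
    apply S.bracketSpan_le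
    intro a ha b _
    have hb : b ∈ Submodule.span ℂ {y, y'} ⊔ S.term 1 := by
      rw [← top_eq_span_sup S y y' hy hy' hgen]; trivial
    obtain ⟨s, hs, w, hw, rfl⟩ := Submodule.mem_sup.mp hb
    obtain ⟨c, c', rfl⟩ := Submodule.mem_span_pair.mp hs
    have expand : S.bracket a (c • y + c' • y' + w) =
        c • S.bracket a y + c' • S.bracket a y' + S.bracket a w := by
      simp only [map_add, map_smul]
    rw [expand]
    have m1 : S.bracket a y ∈ (S.term k).map (S.R y) := ⟨a, ha, rfl⟩
    have m2 : S.bracket a y' ∈ (S.term k).map (S.R y') := ⟨a, ha, rfl⟩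
    have m3 : S.bracket a w ∈ S.term (k+2) :=
      S.term_le_of_le (by omega) (S.bracketSpan_term_term 1 k (S.bracket_mem_bracketSpan ha hw))
    refine Submodule.add_mem _ (Submodule.add_mem _ ?_ ?_) ?_
    · exact Submodule.smul_mem _ _ (le_sup_left (α := Submodule ℂ L)
        (le_sup_left (α := Submodule ℂ L) m1))
    · exact Submodule.smul_mem _ _ (le_sup_left (α := Submodule ℂ L)
        (le_sup_right (α := Submodule ℂ L) m2))
    · exact le_sup_right (α := Submodule ℂ L) m3
  · refine sup_le (sup_le ?_ ?_) (S.term_succ_le (k+1))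
    · rintro z ⟨a, ha, rfl⟩
      exact S.bracket_mem_term_succ ha
    · rintro z ⟨a, ha, rfl⟩
      exact S.bracket_mem_term_succ ha

lemma parity_inv (hy : y ∈ S.L1) (hy' : y' ∈ S.L1) (hgen : S.Generates {y, y'}) :
    ∀ k, S.term k ≤ S.term (k+1) ⊔ (S.term k ⊓ (if k % 2 = 0 then S.L1 else S.L0)) := by
  have hspan_le_L1 : Submodule.span ℂ {y, y'} ≤ S.L1 := by
    apply Submodule.span_le.mpr
    rintro w hw
    rcases Set.mem_insert_iff.mp hw with rfl | hw
    · exact hy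
    · rw [Set.mem_singleton_iff.mp hw]; exact hy'
  intro k
  induction k with
  | zero =>
    simp only [Nat.zero_mod, if_pos rfl]
    intro v _
    have hv : v ∈ Submodule.span ℂ {y, y'} ⊔ S.term 1 := by
      rw [← top_eq_span_sup S y y' hy hy' hgen]; trivial
    obtain ⟨s, hs, t, ht, rfl⟩ := Submodule.mem_sup.mp hv
    refine Submodule.add_mem _ ?_ (Submodule.mem_sup_left ht)
    exact Submodule.mem_sup_right ⟨trivial, hspan_le_L1 hs⟩
  | succ k ih =>
    have hmap : ∀ (u : L), u ∈ S.L1 →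
        ((S.term k).map (S.R u) : Submodule ℂ L) ≤
          S.term (k+2) ⊔ (S.term (k+1) ⊓ (if (k+1) % 2 = 0 then S.L1 else S.L0)) := by
      intro u hu
      have h1 : (S.term k).map (S.R u) ≤ (S.term (k+1) ⊔ (S.term k ⊓ (if k % 2 = 0 then S.L1 else S.L0))).map (S.R u) :=
        Submodule.map_mono ih
      rw [Submodule.map_sup] at h1
      refine h1.trans (sup_le ?_ ?_)
      · intro z hz
        obtain ⟨a, ha, rfl⟩ := hz
        exact Submodule.mem_sup_left (S.bracket_mem_term_succ ha)
      · intro z hz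
        obtain ⟨a, ha, rfl⟩ := hz
        refine Submodule.mem_sup_right ⟨S.bracket_mem_term_succ ha.1, ?_⟩
        rcases Nat.even_or_odd k with he | ho
        · have hk0 : k % 2 = 0 := Nat.even_iff.mp he
          have hk1 : (k+1) % 2 = 1 := by omega
          rw [if_pos hk0] at ha
          rw [hk1]
          simp only [if_neg (by omega : ¬ (1 = 0))]
          exact S.g11 a ha.2 u hu
        · have hk0 : k % 2 = 1 := Nat.odd_iff.mp ho
          have hk1 : (k+1) % 2 = 0 := by omega
          rw [if_neg (by omega : ¬ (k % 2 = 0))] at ha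
          rw [hk1, if_pos rfl]
          exact S.g01 a ha.2 u hu
    exact le_trans (le_of_eq (term_gen S y y' hy hy' hgen k))
      (sup_le (sup_le (hmap y hy) (hmap y' hy')) le_sup_left)

lemma inf_L0_stable (hy : y ∈ S.L1) (hy' : y' ∈ S.L1) (hgen : S.Generates {y, y'})
    (k : ℕ) (hk : k % 2 = 0) : S.term k ⊓ S.L0 = S.term (k+1) ⊓ S.L0 := by
  refine le_antisymm ?_ (inf_le_inf_right _ (S.term_succ_le k))
  rintro v ⟨hvk, hv0⟩
  have := parity_inv S y y' hy hy' hgen k hvk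
  rw [if_pos hk] at this
  obtain ⟨w, hw, u, hu, hsum⟩ := Submodule.mem_sup.mp this
  obtain ⟨w0, hw0, w1, hw1, rfl⟩ := Submodule.mem_sup.mp ((S.term_graded (k+1)) ▸ hw)
  have hodd : v - w0 ∈ S.L1 := by
    have h : v - w0 = w1 + u := by rw [← hsum]; abel
    rw [h]
    exact Submodule.add_mem _ hw1.2 hu.2
  have heven : v - w0 ∈ S.L0 := Submodule.sub_mem _ hv0 hw0.2
  have h0 : v - w0 = 0 := S.grade_zero heven hodd
  have hv : v = w0 := sub_eq_zero.mp h0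
  exact ⟨hv ▸ hw0.1, hv0⟩

lemma inf_L1_stable (hy : y ∈ S.L1) (hy' : y' ∈ S.L1) (hgen : S.Generates {y, y'})
    (k : ℕ) (hk : k % 2 = 1) : S.term k ⊓ S.L1 = S.term (k+1) ⊓ S.L1 := by
  refine le_antisymm ?_ (inf_le_inf_right _ (S.term_succ_le k))
  rintro v ⟨hvk, hv1⟩
  have := parity_inv S y y' hy hy' hgen k hvk
  rw [if_neg (by omega : ¬ (k % 2 = 0))] at this
  obtain ⟨w, hw, u, hu, hsum⟩ := Submodule.mem_sup.mp this
  obtain ⟨w0, hw0, w1, hw1, rfl⟩ := Submodule.mem_sup.mp ((S.term_graded (k+1)) ▸ hw)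
  have heven : v - w1 ∈ S.L0 := by
    have h : v - w1 = w0 + u := by rw [← hsum]; abel
    rw [h]
    exact Submodule.add_mem _ hw0.2 hu.2
  have hodd : v - w1 ∈ S.L1 := Submodule.sub_mem _ hv1 hw1.2
  have h0 : v - w1 = 0 := S.grade_zero heven hodd
  have hv : v = w1 := by
    have := sub_eq_zero.mp h0
    exact this
  exact ⟨hv ▸ hw1.1, hv1⟩

lemma L0_le_term1 (hy : y ∈ S.L1) (hy' : y' ∈ S.L1) (hgen : S.Generates {y, y'}) :
    S.L0 ≤ S.term 1 := by
  have h := inf_L0_stable S y y' hy hy' hgen 0 rfl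
  have h0 : S.term 0 ⊓ S.L0 = S.L0 := by
    rw [show S.term 0 = ⊤ from rfl, top_inf_eq]
  rw [h0] at h
  rw [h]
  exact inf_le_left

end OddGen

end LeibnizSuper


open LeibnizSuper in
/-- Theorem 4.1: a Leibniz superalgebra of nilindex `n + m` with characteristic
sequence `(n | m₁, …, m_k)` and `m₁ ≤ m − 2` cannot be generated by two elements
both lying in the odd part `L₁`. -/
theorem generators_not_both_odd {L : Type*} [AddCommGroup L] [Module ℂ L]
    [FiniteDimensional ℂ L] (S : LeibnizSuper L) (n : ℕ) (ms : List ℕ)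
    (hne : ms ≠ [])
    (hn : Module.finrank ℂ S.L0 = n) (hm : Module.finrank ℂ S.L1 = ms.sum)
    (hcs : S.HasCharSeq [n] ms) (hm1 : ms.headI + 2 ≤ ms.sum)
    (hnil : S.HasNilindex (n + ms.sum)) :
    ¬ ∃ y y' : L, y ∈ S.L1 ∧ y' ∈ S.L1 ∧ S.Generates {y, y'} := by
  rintro ⟨y, y', hy, hy', hgen⟩
  obtain ⟨x, hx, hxnot, hxJ⟩ := hcs.1
  set m := ms.sum with hmdef
  set T : Module.End ℂ L := S.R x with hTdef
  have hTapp : ∀ v : L, T v = S.bracket v x := fun _ => rfl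
  -- basic numerics
  have hn1 : 1 ≤ n := hxJ.2.1 n (by simp)
  have hm1pos : 1 ≤ ms.headI := by
    obtain ⟨x2, hx2, _, hJ2⟩ := hcs.2.2.1
    cases ms with
    | nil => exact absurd rfl hne
    | cons hd tl => exact hJ2.2.1 hd (by simp)
  have hm3 : 3 ≤ m := by omega
  -- nilindex data
  have hbot : S.term (n + m - 1) = ⊥ := hnil.2.1
  have hnbot : ∀ t, t ≤ n + m - 2 → S.term t ≠ ⊥ := by
    intro t ht
    exact hnil.2.2 t (by omega)
  have hbot' : ∀ t, n + m - 1 ≤ t → S.term t = ⊥ := by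
    intro t ht
    exact le_bot_iff.mp (hbot ▸ S.term_le_of_le ht)
  -- rank facts for T restricted to L0
  have hrank : ∀ j, j ≤ n → Module.finrank ℂ (LinearMap.range ((S.R0 x hx) ^ j)) = n - j := by
    intro j
    induction j with
    | zero =>
      intro _
      rw [pow_zero, Module.End.one_eq_id, LinearMap.range_id]
      simpa [finrank_top] using hn
    | succ j ih =>
      intro hj
      have hcount := hxJ.2.2 j
      have hc1 : ([n].countP fun a => decide (j+1 ≤ a)) = 1 := by
        simp only [List.countP_cons, List.countP_nil]
        simp [decide_eq_true_eq, (by omega : j + 1 ≤ n)]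
      rw [hc1] at hcount
      have hmono : Module.finrank ℂ (LinearMap.range ((S.R0 x hx) ^ (j+1))) ≤
          Module.finrank ℂ (LinearMap.range ((S.R0 x hx) ^ j)) :=
        Submodule.finrank_mono (JordanAux.range_pow_le _ j)
      have hih := ih (by omega)
      omega
  have hT0n : (S.R0 x hx) ^ n = 0 := by
    apply LinearMap.range_eq_bot.mp
    apply Submodule.finrank_eq_zero.mp
    have := hrank n le_rfl
    omega
  have hrestr : ∀ (j : ℕ) (v : L) (hv : v ∈ S.L0), (((S.R0 x hx) ^ j) ⟨v, hv⟩ : L) = (T ^ j) v := by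
    intro j v hv
    have : (S.R0 x hx) ^ j = ((S.R x) ^ j).restrict
        (Module.End.pow_apply_mem_of_forall_mem j (fun z hz => S.g00 z hz x hx)) := by
      exact Module.End.pow_restrict j _
    rw [this]
    rfl
  have hTmem0 : ∀ (j : ℕ) (v : L), v ∈ S.L0 → (T^j) v ∈ S.L0 := by
    intro j v hv
    exact Module.End.pow_apply_mem_of_forall_mem j (fun z hz => S.g00 z hz x hx) v hv
  have hTpown : ∀ (v : L), v ∈ S.L0 → (T^n) v = 0 := by
    intro v hv
    have := hrestr n v hv
    rw [hT0n] at this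
    simpa using this.symm
  have hTpow0 : ∀ (v : L), v ∈ S.L0 → ∀ j, n ≤ j → (T^j) v = 0 := by
    intro v hv j hj
    obtain ⟨i, rfl⟩ := Nat.exists_eq_add_of_le hj
    have h2 : (T^(n+i)) v = (T^n) ((T^i) v) := by
      rw [pow_add]; rfl
    have h3 : (T^(n+i)) v = (T^i) ((T^n) v) := by
      rw [add_comm, pow_add]; rfl
    rw [h3, hTpown v hv, map_zero]
  -- map-rank correspondence
  have hmapeq : ∀ j, Submodule.map (T^j) S.L0
      = Submodule.map S.L0.subtype (LinearMap.range ((S.R0 x hx)^j)) := by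
    intro j
    ext w
    simp only [Submodule.mem_map, LinearMap.mem_range]
    constructor
    · rintro ⟨v, hv, rfl⟩
      exact ⟨((S.R0 x hx)^j) ⟨v, hv⟩, ⟨⟨v, hv⟩, rfl⟩, hrestr j v hv⟩
    · rintro ⟨u, ⟨w', rfl⟩, rfl⟩
      exact ⟨(w' : L), w'.2, by rw [← hrestr j w' w'.2]; rfl⟩
  have hmapfin : ∀ j, j ≤ n → Module.finrank ℂ ↥(Submodule.map (T^j) S.L0) = n - j := by
    intro j hj
    rw [hmapeq j, Submodule.finrank_map_subtype_eq]
    exact hrank j hj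
  -- graded dimension split
  have hab : ∀ k, Module.finrank ℂ ↥(S.term k) =
      Module.finrank ℂ ↥(S.term k ⊓ S.L0) + Module.finrank ℂ ↥(S.term k ⊓ S.L1) := by
    intro k
    have hsup := Submodule.finrank_sup_add_finrank_inf_eq (S.term k ⊓ S.L0) (S.term k ⊓ S.L1)
    have hinf : (S.term k ⊓ S.L0) ⊓ (S.term k ⊓ S.L1) = ⊥ := by
      apply le_bot_iff.mp
      intro v hv
      exact (Submodule.mem_bot ℂ).mpr (S.grade_zero hv.1.2 hv.2.2)
    rw [hinf, ← S.term_graded k, finrank_bot] at hsup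
    omega
  -- strict descent
  have hstrict : ∀ k, k ≤ n + m - 2 →
      Module.finrank ℂ ↥(S.term (k+1)) < Module.finrank ℂ ↥(S.term k) :=
    fun k hk => Submodule.finrank_lt_finrank_of_lt (S.term_lt hbot (hnbot k hk))
  -- parity stability (dims)
  have heven : ∀ k, k % 2 = 0 →
      Module.finrank ℂ ↥(S.term k ⊓ S.L0) = Module.finrank ℂ ↥(S.term (k+1) ⊓ S.L0) :=
    fun k hk => by rw [inf_L0_stable S y y' hy hy' hgen k hk]
  have hodd : ∀ k, k % 2 = 1 →
      Module.finrank ℂ ↥(S.term k ⊓ S.L1) = Module.finrank ℂ ↥(S.term (k+1) ⊓ S.L1) :=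
    fun k hk => by rw [inf_L1_stable S y y' hy hy' hgen k hk]
  -- a-drop at odd steps
  have haodd : ∀ k, k % 2 = 1 → k ≤ n + m - 2 →
      Module.finrank ℂ ↥(S.term (k+1) ⊓ S.L0) < Module.finrank ℂ ↥(S.term k ⊓ S.L0) := by
    intro k hk1 hk2
    have h1 := hstrict k hk2
    have h2 := hab k
    have h3 := hab (k+1)
    have h4 := hodd k hk1
    omega
  -- a at index 1
  have ha1 : Module.finrank ℂ ↥(S.term 1 ⊓ S.L0) = n := by
    have h := inf_L0_stable S y y' hy hy' hgen 0 rfl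
    have h0 : S.term 0 ⊓ S.L0 = S.L0 := by
      rw [show S.term 0 = ⊤ from rfl, top_inf_eq]
    rw [h0] at h
    rw [← h, hn]
  -- chain bound
  have hchain : ∀ j, 2*j+1 ≤ n + m - 1 →
      Module.finrank ℂ ↥(S.term (2*j+1) ⊓ S.L0) + j ≤ n := by
    intro j
    induction j with
    | zero =>
      intro _
      simpa [ha1] using le_refl n
    | succ j ih =>
      intro hj
      have h1 := ih (by omega)
      have h2 := haodd (2*j+1) (by omega) (by omega)
      have h3 := heven (2*j+2) (by omega)
      have heq1 : 2*j+1+1 = 2*j+2 := by omega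
      have heq2 : 2*j+2+1 = 2*(j+1)+1 := by omega
      rw [heq1] at h2
      rw [heq2] at h3
      omega
  -- m ≤ n + 2
  have hm_le : m ≤ n + 2 := by
    by_contra hcon
    push_neg at hcon
    have hdm := Nat.div_add_mod (n+m-3) 2
    have hmod : (n+m-3) % 2 < 2 := Nat.mod_lt _ (by omega)
    set j1 := (n+m-3)/2 with hj1
    have hle : 2*j1+1 ≤ n + m - 2 := by omega
    have h1 := hchain j1 (by omega)
    have h2 := haodd (2*j1+1) (by omega) hle
    omega
  -- depth of T-powers
  have hx1 : x ∈ S.term 1 := L0_le_term1 S y y' hy hy' hgen hx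
  have hdepth : ∀ (v : L), v ∈ S.L0 → ∀ j, (T^j) v ∈ S.term (2*j+1) := by
    intro v hv j
    induction j with
    | zero =>
      simpa using L0_le_term1 S y y' hy hy' hgen hv
    | succ j ih =>
      have h1 : (T^(j+1)) v = S.bracket ((T^j) v) x := by
        rw [pow_succ']; rfl
      rw [h1]
      exact S.term_le_of_le (by omega)
        (S.bracketSpan_term_term 1 (2*j+1) (S.bracket_mem_bracketSpan ih hx1))
  -- existence of a regular vector
  obtain ⟨e, he0, hen⟩ : ∃ e, e ∈ S.L0 ∧ (T^(n-1)) e ≠ 0 := by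
    have h1 : LinearMap.range ((S.R0 x hx)^(n-1)) ≠ ⊥ := by
      intro hbotr
      have := hrank (n-1) (by omega)
      rw [hbotr] at this
      rw [finrank_bot] at this
      omega
    obtain ⟨u, hu, hune⟩ := (Submodule.ne_bot_iff _).mp h1
    obtain ⟨w, rfl⟩ := hu
    refine ⟨(w : L), w.2, ?_⟩
    rw [← hrestr (n-1) w w.2]
    · intro hz
      apply hune
      have heta : ((S.R0 x hx ^ (n-1)) ⟨(w : L), w.2⟩ : ↥S.L0) = (S.R0 x hx ^ (n-1)) w := rfl
      rw [← heta]
      exact Subtype.ext hz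
  -- n + 1 ≤ m
  have hn_le_m : n + 1 ≤ m := by
    by_contra hcon
    push_neg at hcon
    have h1 : S.term (2*(n-1)+1) = ⊥ := hbot' _ (by omega)
    have h2 := hdepth e he0 (n-1)
    rw [h1] at h2
    exact hen ((Submodule.mem_bot ℂ).mp h2)
  -- exact even description
  have haexact : ∀ j, S.term (2*j+1) ⊓ S.L0 = Submodule.map (T^j) S.L0 := by
    intro j
    rcases lt_or_ge j n with hj | hj
    · have hle : Submodule.map (T^j) S.L0 ≤ S.term (2*j+1) ⊓ S.L0 := by
        rintro z ⟨v, hv, rfl⟩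
        exact ⟨hdepth v hv j, hTmem0 j v hv⟩
      refine (Submodule.eq_of_le_of_finrank_le hle ?_).symm
      rw [hmapfin j (by omega)]
      have := hchain j (by omega)
      omega
    · have h2 : Submodule.map (T^j) S.L0 = ⊥ := by
        apply le_bot_iff.mp
        rintro z ⟨v, hv, rfl⟩
        rw [hTpow0 v hv j (by omega)]
        exact Submodule.zero_mem ⊥
      have h1 : S.term (2*j+1) ⊓ S.L0 = ⊥ := by
        rcases le_or_gt (2*j+1) (n+m-1) with hcase | hcase
        · apply Submodule.finrank_eq_zero.mp
          have := hchain j hcase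
          omega
        · rw [hbot' _ (by omega), bot_inf_eq]
      rw [h1, h2]
  -- x is not in term 3 when n ≥ 2
  have hx3 : 2 ≤ n → x ∉ S.term 3 := by
    intro hn2 hx3
    have hdepth4 : ∀ (v : L), v ∈ S.L0 → ∀ j, (T^j) v ∈ S.term (4*j+1) := by
      intro v hv j
      induction j with
      | zero => simpa using L0_le_term1 S y y' hy hy' hgen hv
      | succ j ih =>
        have h1 : (T^(j+1)) v = S.bracket ((T^j) v) x := by rw [pow_succ']; rfl
        rw [h1]
        exact S.term_le_of_le (by omega)
          (S.bracketSpan_term_term 3 (4*j+1) (S.bracket_mem_bracketSpan ih hx3))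
    have h2 := hdepth4 e he0 (n-1)
    have h3 : S.term (4*(n-1)+1) = ⊥ := hbot' _ (by omega)
    rw [h3] at h2
    exact hen ((Submodule.mem_bot ℂ).mp h2)
  have hxne : x ≠ 0 := by
    intro h
    apply hxnot
    rw [h]
    exact Submodule.zero_mem _
  -- x is not in the image of T on L0
  have hxM1 : x ∉ Submodule.map T S.L0 := by
    rcases lt_or_ge n 2 with hn2 | hn2
    · have h1 : Submodule.map T S.L0 = ⊥ := by
        apply le_bot_iff.mp
        rintro z ⟨v, hv, rfl⟩
        have h : T v = (T^1) v := by rw [pow_one]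
        rw [h, hTpow0 v hv 1 (by omega)]
        exact Submodule.zero_mem ⊥
      rw [h1]
      intro h
      exact hxne ((Submodule.mem_bot ℂ).mp h)
    · intro hmem
      apply hx3 hn2
      have hle : Submodule.map T S.L0 ≤ S.term 3 := by
        intro z hz
        have h := haexact 1
        rw [pow_one] at h
        have hz' : z ∈ S.term (2*1+1) ⊓ S.L0 := by rw [h]; exact hz
        exact S.term_le_of_le (by omega) hz'.1
      exact hle hmem
  -- cyclic decomposition of L0
  have hL0split : S.L0 = Submodule.span ℂ {x} ⊔ Submodule.map T S.L0 := by
    have hle : Submodule.span ℂ {x} ⊔ Submodule.map T S.L0 ≤ S.L0 := by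
      refine sup_le ?_ ?_
      · rw [Submodule.span_singleton_le_iff_mem]; exact hx
      · rintro z ⟨v, hv, rfl⟩
        have h : T v = (T^1) v := by rw [pow_one]
        rw [h]; exact hTmem0 1 v hv
    refine (Submodule.eq_of_le_of_finrank_le hle ?_).symm
    have hdisj : Submodule.span ℂ {x} ⊓ Submodule.map T S.L0 = ⊥ := by
      apply le_bot_iff.mp
      rintro z ⟨hz1, hz2⟩
      obtain ⟨c, rfl⟩ := Submodule.mem_span_singleton.mp hz1
      rcases eq_or_ne c 0 with rfl | hc
      · rw [zero_smul]; exact Submodule.zero_mem ⊥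
      · exfalso
        apply hxM1
        have h : x = c⁻¹ • (c • x) := by rw [smul_smul, inv_mul_cancel₀ hc, one_smul]
        rw [h]
        exact Submodule.smul_mem _ _ hz2
    have hsum := Submodule.finrank_sup_add_finrank_inf_eq
      (Submodule.span ℂ {x}) (Submodule.map T S.L0)
    rw [hdisj, finrank_bot] at hsum
    have hspan1 : Module.finrank ℂ ↥(Submodule.span ℂ {x}) = 1 := finrank_span_singleton hxne
    have hmap1 : Module.finrank ℂ ↥(Submodule.map T S.L0) = n - 1 := by
      have h := hmapfin 1 (by omega)
      rw [pow_one] at h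
      exact h
    rw [hn]
    omega
  -- elements X s
  set X : ℕ → L := fun s => (T^s) x with hXdef
  set SX : ℕ → Set L := fun j => {w | ∃ s, w = X (j+s)} with hSXdef
  have hXmem : ∀ s, X s ∈ S.L0 := fun s => hTmem0 s x hx
  have hX0 : X 0 = x := by simp [hXdef]
  have hXsucc : ∀ s, X (s+1) = S.bracket (X s) x := by
    intro s
    show (T^(s+1)) x = S.bracket ((T^s) x) x
    rw [pow_succ']
    rfl
  have hXzero : ∀ s, n ≤ s → X s = 0 := fun s hs => hTpow0 x hx s hs
  have hMspan : ∀ j, Submodule.map (T^j) S.L0 = Submodule.span ℂ (SX j) := by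
    have key : ∀ t j, n ≤ j + t → Submodule.map (T^j) S.L0 ≤ Submodule.span ℂ (SX j) := by
      intro t
      induction t with
      | zero =>
        intro j hj
        rintro z ⟨v, hv, rfl⟩
        rw [hTpow0 v hv j (by omega)]
        exact Submodule.zero_mem _
      | succ t ih =>
        intro j hj
        have hrw : Submodule.map (T^j) S.L0 =
            Submodule.span ℂ {X j} ⊔ Submodule.map (T^(j+1)) S.L0 := by
          conv_lhs => rw [hL0split]
          rw [Submodule.map_sup]
          congr 1
          · rw [Submodule.map_span, Set.image_singleton]
          · rw [pow_succ, Module.End.mul_eq_comp, Submodule.map_comp]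
        rw [hrw]
        refine sup_le ?_ ?_
        · rw [Submodule.span_singleton_le_iff_mem]
          exact Submodule.subset_span ⟨0, by simp⟩
        · refine (ih (j+1) (by omega)).trans (Submodule.span_mono ?_)
          rintro w ⟨s, rfl⟩
          exact ⟨1+s, by rw [show j + (1+s) = j+1+s by omega]⟩
    intro j
    refine le_antisymm (key n j (by omega)) ?_
    apply Submodule.span_le.mpr
    rintro w ⟨s, rfl⟩
    refine ⟨(T^s) x, hTmem0 s x hx, ?_⟩
    show (T^j) ((T^s) x) = (T^(j+s)) x
    rw [pow_add]
    rfl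
  -- right multiplication by deep elements vanishes
  have hRX : ∀ s, 1 ≤ s → ∀ v : L, S.bracket v (X s) = 0 := by
    intro s
    induction s with
    | zero => omega
    | succ s ih =>
      intro _ v
      rcases Nat.eq_zero_or_pos s with rfl | hs
      · rw [hXsucc 0, hX0, S.leib00 v x hx x hx]
        abel
      · rw [hXsucc s, S.leib00 v (X s) (hXmem s) x hx,
          ih (by omega) v, ih (by omega) (S.bracket v x)]
        simp
  have hR0deep : ∀ w ∈ Submodule.map T S.L0, ∀ v : L, S.bracket v w = 0 := by
    intro w hw v
    have h1 : Submodule.map T S.L0 = Submodule.span ℂ (SX 1) := by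
      rw [← hMspan 1, pow_one]
    rw [h1] at hw
    induction hw using Submodule.span_induction with
    | mem z hz =>
      obtain ⟨s, rfl⟩ := hz
      exact hRX (1+s) (by omega) v
    | zero => simp
    | add z w _ _ hz hw => rw [map_add, hz, hw, add_zero]
    | smul c z _ hz => rw [map_smul, hz, smul_zero]
  -- bracket linearity helpers
  have hbr_smul : ∀ (c : ℂ) (u v : L), S.bracket (c • u) v = c • S.bracket u v := by
    intro c u v
    rw [map_smul]
    rfl
  have hbr_sub : ∀ (u u' v : L), S.bracket (u - u') v = S.bracket u v - S.bracket u' v := by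
    intro u u' v
    rw [map_sub]
    rfl
  have hbr_add : ∀ (u u' v : L), S.bracket (u + u') v = S.bracket u v + S.bracket u' v := by
    intro u u' v
    rw [map_add]
    rfl
  -- the generators as a pair
  set Y : Fin 2 → L := ![y, y'] with hYdef
  have hY1 : ∀ i, Y i ∈ S.L1 := by
    intro i
    fin_cases i
    · exact hy
    · exact hy'
  have hmapL0 : Submodule.map T S.L0 ≤ S.L0 := by
    rintro z ⟨v, hv, rfl⟩
    have h : T v = (T^1) v := by rw [pow_one]
    rw [h]
    exact hTmem0 1 v hv
  -- choose structure constants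
  have hNZex : ∀ a b : Fin 2, ∃ (c : ℂ) (z : L), z ∈ Submodule.map T S.L0 ∧
      S.bracket (Y a) (Y b) = c • x + z := by
    intro a b
    have hmem : S.bracket (Y a) (Y b) ∈ S.L0 := S.g11 _ (hY1 a) _ (hY1 b)
    rw [hL0split] at hmem
    obtain ⟨s, hs, z, hz, hsum⟩ := Submodule.mem_sup.mp hmem
    obtain ⟨c, rfl⟩ := Submodule.mem_span_singleton.mp hs
    exact ⟨c, z, hz, hsum.symm⟩
  choose N Z hZmem hNZ using hNZex
  -- the Clifford identity
  have hI4 : ∀ (z : L) (a b : Fin 2),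
      S.bracket (S.bracket z (Y a)) (Y b) + S.bracket (S.bracket z (Y b)) (Y a)
        = N a b • S.bracket z x := by
    intro z a b
    have h := S.leib11 z (Y a) (hY1 a) (Y b) (hY1 b)
    rw [hNZ a b, map_add, map_smul, hR0deep _ (hZmem a b) z, add_zero] at h
    exact h.symm
  -- N is nonzero
  have hNne : ∃ a b, N a b ≠ 0 := by
    by_contra hall
    push_neg at hall
    apply hxM1
    have hterm1 : S.term 1 ≤ Submodule.span ℂ
        (Set.range (fun p : Fin 2 × Fin 2 => S.bracket (Y p.1) (Y p.2))) ⊔ S.term 2 := by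
      have hmapy : ∀ u : L, u ∈ S.L1 → (∀ i : Fin 2, S.bracket (Y i) u ∈
          Submodule.span ℂ (Set.range (fun p : Fin 2 × Fin 2 => S.bracket (Y p.1) (Y p.2)))) →
          Submodule.map (S.R u) (S.term 0) ≤ Submodule.span ℂ
            (Set.range (fun p : Fin 2 × Fin 2 => S.bracket (Y p.1) (Y p.2))) ⊔ S.term 2 := by
        intro u hu hgens
        rintro z ⟨a, _, rfl⟩
        have ha : a ∈ Submodule.span ℂ {y, y'} ⊔ S.term 1 := by
          rw [← top_eq_span_sup S y y' hy hy' hgen]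
          trivial
        obtain ⟨s, hs, w, hw, rfl⟩ := Submodule.mem_sup.mp ha
        obtain ⟨c, c', rfl⟩ := Submodule.mem_span_pair.mp hs
        have hexp : S.R u (c • y + c' • y' + w) =
            c • S.bracket y u + c' • S.bracket y' u + S.bracket w u := by
          show S.bracket (c • y + c' • y' + w) u = _
          rw [hbr_add, hbr_add, hbr_smul, hbr_smul]
        rw [hexp]
        refine Submodule.add_mem _ (Submodule.add_mem _ ?_ ?_) ?_
        · exact Submodule.smul_mem _ _ (Submodule.mem_sup_left (hgens 0))
        · exact Submodule.smul_mem _ _ (Submodule.mem_sup_left (hgens 1))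
        · exact Submodule.mem_sup_right (S.bracket_mem_term_succ hw)
      have h0 := term_gen S y y' hy hy' hgen 0
      rw [h0]
      refine sup_le (sup_le ?_ ?_) le_sup_right
      · refine hmapy y hy ?_
        intro i
        apply Submodule.subset_span
        exact ⟨(i, 0), rfl⟩
      · refine hmapy y' hy' ?_
        intro i
        apply Submodule.subset_span
        exact ⟨(i, 1), rfl⟩
    have hx12 := hterm1 hx1
    obtain ⟨w, hwspan, u, hu, hsum⟩ := Submodule.mem_sup.mp hx12
    have hwM : w ∈ Submodule.map T S.L0 := by
      refine Submodule.span_le.mpr ?_ hwspan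
      rintro z ⟨p, rfl⟩
      show S.bracket (Y p.1) (Y p.2) ∈ (Submodule.map T S.L0 : Set L)
      rw [hNZ p.1 p.2, hall p.1 p.2, zero_smul, zero_add]
      exact hZmem p.1 p.2
    have huL0 : u ∈ S.L0 := by
      have h : u = x - w := by rw [← hsum]; abel
      rw [h]
      exact Submodule.sub_mem _ hx (hmapL0 hwM)
    have huM : u ∈ Submodule.map T S.L0 := by
      have h2 := inf_L0_stable S y y' hy hy' hgen 2 rfl
      have h3 : S.term 3 ⊓ S.L0 = Submodule.map T S.L0 := by
        have h := haexact 1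
        rw [pow_one] at h
        convert h using 3 <;> norm_num
      have hu2 : u ∈ S.term 2 ⊓ S.L0 := ⟨hu, huL0⟩
      rw [h2, h3] at hu2
      exact hu2
    rw [← hsum]
    exact Submodule.add_mem _ hwM huM
  -- the top even vector is nonzero
  have hXn1ne : X (n-1) ≠ 0 := by
    intro h0
    have hspan : Submodule.map (T^(n-1)) S.L0 = ⊥ := by
      rw [hMspan (n-1)]
      apply le_bot_iff.mp
      apply Submodule.span_le.mpr
      rintro w ⟨s, rfl⟩
      rcases Nat.eq_zero_or_pos s with rfl | hs
      · rw [show n-1+0 = n-1 by omega, h0]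
        exact Submodule.zero_mem ⊥
      · rw [hXzero (n-1+s) (by omega)]
        exact Submodule.zero_mem ⊥
    have h := hmapfin (n-1) (by omega)
    rw [hspan, finrank_bot] at h
    omega
  -- symmetry of N
  have hNsym : 2 ≤ n → ∀ a b, N a b = N b a := by
    intro hn2 a b
    have h1 := hI4 (X (n-2)) a b
    have h2 := hI4 (X (n-2)) b a
    have h3 : N a b • S.bracket (X (n-2)) x = N b a • S.bracket (X (n-2)) x := by
      rw [← h1, ← h2]
      abel
    have h4 : S.bracket (X (n-2)) x = X (n-1) := by
      rw [← hXsucc (n-2), show n-2+1 = n-1 by omega]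
    rw [h4] at h3
    have h5 : (N a b - N b a) • X (n-1) = 0 := by
      rw [sub_smul, h3, sub_self]
    rcases smul_eq_zero.mp h5 with h | h
    · exact sub_eq_zero.mp h
    · exact absurd h hXn1ne
  -- T is central: [ [z,x], Y a ] = [ [z,Ya], x ]  (needs n ≥ 2)
  have hcent : 2 ≤ n → ∀ (z : L) (a : Fin 2),
      S.bracket (S.bracket z x) (Y a) = S.bracket (S.bracket z (Y a)) x := by
    intro hn2
    have hdiag : ∀ d : Fin 2, N d d ≠ 0 → ∃ (Yu : L) (c : ℂ) (ν : Fin 2 → ℂ), c ≠ 0 ∧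
        (∀ w : L, S.bracket (S.bracket w Yu) Yu = c • S.bracket w x) ∧
        (∀ (a : Fin 2) (w : L), S.bracket (S.bracket w (Y a)) Yu
            + S.bracket (S.bracket w Yu) (Y a) = ν a • S.bracket w x) := by
      intro d hd
      refine ⟨Y d, 2⁻¹ * N d d, fun a => N a d,
        mul_ne_zero (inv_ne_zero two_ne_zero) hd, ?_, fun a w => hI4 w a d⟩
      intro w
      have h2v : (2:ℂ) • S.bracket (S.bracket w (Y d)) (Y d) = N d d • S.bracket w x := by
        rw [two_smul]
        exact hI4 w d d
      calc S.bracket (S.bracket w (Y d)) (Y d)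
          = (2:ℂ)⁻¹ • ((2:ℂ) • S.bracket (S.bracket w (Y d)) (Y d)) := by
            rw [smul_smul, inv_mul_cancel₀ two_ne_zero, one_smul]
        _ = (2⁻¹ * N d d) • S.bracket w x := by rw [h2v, smul_smul]
    obtain ⟨Yu, c, ν, hc, hA, hB⟩ : ∃ (Yu : L) (c : ℂ) (ν : Fin 2 → ℂ), c ≠ 0 ∧
        (∀ w : L, S.bracket (S.bracket w Yu) Yu = c • S.bracket w x) ∧
        (∀ (a : Fin 2) (w : L), S.bracket (S.bracket w (Y a)) Yu
            + S.bracket (S.bracket w Yu) (Y a) = ν a • S.bracket w x) := by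
      rcases ne_or_eq (N 0 0) 0 with h00 | h00
      · exact hdiag 0 h00
      rcases ne_or_eq (N 1 1) 0 with h11 | h11
      · exact hdiag 1 h11
      have h01 : N 0 1 ≠ 0 := by
        obtain ⟨a, b, hab⟩ := hNne
        have hsym := hNsym hn2
        fin_cases a <;> fin_cases b
        · exact absurd h00 hab
        · exact hab
        · rw [hsym 0 1]; exact hab
        · exact absurd h11 hab
      have hzd : ∀ d : Fin 2, N d d = 0 → ∀ w : L,
          S.bracket (S.bracket w (Y d)) (Y d) = 0 := by
        intro d hd w
        have h2v : (2:ℂ) • S.bracket (S.bracket w (Y d)) (Y d) = 0 := by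
          rw [two_smul]
          rw [hI4 w d d, hd, zero_smul]
        rcases smul_eq_zero.mp h2v with h | h
        · exact absurd h two_ne_zero
        · exact h
      refine ⟨Y 0 + Y 1, N 0 1, fun a => N a 0 + N a 1, h01, ?_, ?_⟩
      · intro w
        have e1 : S.bracket w (Y 0 + Y 1) = S.bracket w (Y 0) + S.bracket w (Y 1) :=
          map_add _ _ _
        rw [e1, hbr_add]
        have e2 : S.bracket (S.bracket w (Y 0)) (Y 0 + Y 1)
            = S.bracket (S.bracket w (Y 0)) (Y 0) + S.bracket (S.bracket w (Y 0)) (Y 1) :=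
          map_add _ _ _
        have e3 : S.bracket (S.bracket w (Y 1)) (Y 0 + Y 1)
            = S.bracket (S.bracket w (Y 1)) (Y 0) + S.bracket (S.bracket w (Y 1)) (Y 1) :=
          map_add _ _ _
        rw [e2, e3, hzd 0 h00 w, hzd 1 h11 w, zero_add, add_zero]
        exact hI4 w 0 1
      · intro a w
        have e1 : S.bracket (S.bracket w (Y a)) (Y 0 + Y 1)
            = S.bracket (S.bracket w (Y a)) (Y 0) + S.bracket (S.bracket w (Y a)) (Y 1) :=
          map_add _ _ _
        have e2 : S.bracket w (Y 0 + Y 1) = S.bracket w (Y 0) + S.bracket w (Y 1) :=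
          map_add _ _ _
        rw [e1, e2, hbr_add, add_smul, ← hI4 w a 0, ← hI4 w a 1]
        abel
    have hD : ∀ z : L, S.bracket (S.bracket z x) Yu = S.bracket (S.bracket z Yu) x := by
      intro z
      apply smul_right_injective L hc
      show c • _ = c • _
      have l1 : c • S.bracket (S.bracket z x) Yu
          = S.bracket (S.bracket (S.bracket z Yu) Yu) Yu := by
        rw [← hbr_smul, ← hA z]
      have l2 : c • S.bracket (S.bracket z Yu) x
          = S.bracket (S.bracket (S.bracket z Yu) Yu) Yu := (hA (S.bracket z Yu)).symm
      rw [l1, l2]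
    intro z a
    apply smul_right_injective L hc
    show c • _ = c • _
    have hP : S.bracket (S.bracket (S.bracket z (Y a)) Yu) Yu
        = S.bracket (S.bracket (S.bracket z Yu) Yu) (Y a) := by
      have b1 : S.bracket (S.bracket z (Y a)) Yu
          = ν a • S.bracket z x - S.bracket (S.bracket z Yu) (Y a) :=
        eq_sub_of_add_eq (hB a z)
      rw [b1, hbr_sub, hbr_smul]
      have b2 : S.bracket (S.bracket (S.bracket z Yu) (Y a)) Yu
          = ν a • S.bracket (S.bracket z Yu) x
            - S.bracket (S.bracket (S.bracket z Yu) Yu) (Y a) :=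
        eq_sub_of_add_eq (hB a (S.bracket z Yu))
      rw [b2, hD z]
      abel
    have r1 : c • S.bracket (S.bracket z (Y a)) x
        = S.bracket (S.bracket (S.bracket z (Y a)) Yu) Yu := (hA _).symm
    have r2 : c • S.bracket (S.bracket z x) (Y a)
        = S.bracket (S.bracket (S.bracket z Yu) Yu) (Y a) := by
      rw [← hbr_smul, ← hA z]
    rw [r1, r2, hP]
  -- the odd elements xi
  set xi : ℕ → Fin 2 → L := fun s a => S.bracket (X s) (Y a) with hxidef
  have hTxi : 2 ≤ n → ∀ s (a : Fin 2), S.bracket (xi s a) x = xi (s+1) a := by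
    intro hn2 s a
    have h := hcent hn2 (X s) a
    rw [← hXsucc s] at h
    exact h.symm
  have hTpowxi : ∀ k, (k = 0 ∨ 2 ≤ n) → ∀ s (a : Fin 2), (T^k) (xi s a) = xi (s+k) a := by
    intro k hk
    induction k with
    | zero => intro s a; simp
    | succ k ih =>
      intro s a
      have hn2 : 2 ≤ n := by
        rcases hk with h | h
        · omega
        · exact h
      have h1 : (T^(k+1)) (xi s a) = T ((T^k) (xi s a)) := by rw [pow_succ']; rfl
      rw [h1, ih (Or.inr hn2) s a]
      show S.bracket (xi (s+k) a) x = xi (s+(k+1)) a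
      rw [hTxi hn2 (s+k) a, show s+k+1 = s+(k+1) from by omega]
  set SXI : ℕ → Set L := fun j => {w | ∃ s : ℕ, ∃ a : Fin 2, w = xi (j+s) a} with hSXIdef
  have hximem1 : ∀ s a, xi s a ∈ S.L1 := fun s a => S.g01 _ (hXmem s) _ (hY1 a)
  have hxiterm : ∀ s (a : Fin 2), xi s a ∈ S.term (2*s+2) := fun s a =>
    S.bracket_mem_term_succ (hdepth x hx s)
  have hxizero : ∀ s (a : Fin 2), n ≤ s → xi s a = 0 := by
    intro s a hs
    show S.bracket (X s) (Y a) = 0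
    rw [hXzero s hs, map_zero]
    rfl
  have hSXIsub : ∀ j, SXI (j+1) ⊆ SXI j := by
    rintro j w ⟨s, a, rfl⟩
    exact ⟨s+1, a, by rw [show j+(s+1) = j+1+s from by omega]⟩
  have hXi : ∀ j, S.term (2*j+2) ⊓ S.L1 = Submodule.span ℂ (SXI j) := by
    have hspan_le : ∀ j, Submodule.span ℂ (SXI j) ≤ S.term (2*j+2) ⊓ S.L1 := by
      intro j
      apply Submodule.span_le.mpr
      rintro w ⟨s, a, rfl⟩
      exact ⟨S.term_le_of_le (by omega) (hxiterm (j+s) a), hximem1 _ _⟩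
    have key : ∀ t j, n + m ≤ 2*j + 2 + t → S.term (2*j+2) ⊓ S.L1 = Submodule.span ℂ (SXI j) := by
      intro t
      induction t with
      | zero =>
        intro j hj
        have h1 : S.term (2*j+2) = ⊥ := hbot' _ (by omega)
        have h2 : Submodule.span ℂ (SXI j) = ⊥ := by
          apply le_bot_iff.mp
          apply Submodule.span_le.mpr
          rintro w ⟨s, a, rfl⟩
          rw [hxizero (j+s) a (by omega)]
          exact Submodule.zero_mem ⊥
        rw [h1, h2, bot_inf_eq]
      | succ t ih =>
        intro j hj
        refine le_antisymm ?_ (hspan_le j)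
        rintro u ⟨hu2, hu1⟩
        have hu2' : u ∈ (S.term (2*j+1)).map (S.R y) ⊔ (S.term (2*j+1)).map (S.R y')
            ⊔ S.term (2*j+3) := by
          have h : u ∈ S.term (2*j+1+1) := by
            rw [show 2*j+1+1 = 2*j+2 from by omega]
            exact hu2
          rw [term_gen S y y' hy hy' hgen (2*j+1)] at h
          rw [show 2*j+1+2 = 2*j+3 from by omega] at h
          exact h
        obtain ⟨r, hr, w, hw, hsum⟩ := Submodule.mem_sup.mp hu2'
        obtain ⟨r1, hr1, r2, hr2, hsum'⟩ := Submodule.mem_sup.mp hr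
        obtain ⟨v1, hv1, rfl⟩ := hr1
        obtain ⟨v2, hv2, rfl⟩ := hr2
        obtain ⟨p1, hp1, q1, hq1, rfl⟩ := Submodule.mem_sup.mp ((S.term_graded (2*j+1)) ▸ hv1)
        obtain ⟨p2, hp2, q2, hq2, rfl⟩ := Submodule.mem_sup.mp ((S.term_graded (2*j+1)) ▸ hv2)
        obtain ⟨w0, hw0, w1, hw1, rfl⟩ := Submodule.mem_sup.mp ((S.term_graded (2*j+3)) ▸ hw)
        have hbry : ∀ (u' : L), u' ∈ S.term (2*j+1) ⊓ S.L0 → ∀ i : Fin 2,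
            S.bracket u' (Y i) ∈ Submodule.span ℂ (SXI j) := by
          intro u' hu' i
          have hu'' : u' ∈ Submodule.span ℂ (SX j) := by
            rw [← hMspan j, ← haexact j]
            exact hu'
          have hlin : Submodule.span ℂ (SX j) ≤
              Submodule.comap (S.R (Y i)) (Submodule.span ℂ (SXI j)) := by
            apply Submodule.span_le.mpr
            rintro w' ⟨s, rfl⟩
            apply Submodule.subset_span
            exact ⟨s, i, rfl⟩
          exact hlin hu''
        have hm1' : S.bracket p1 y = S.bracket p1 (Y 0) := rfl
        have hm2' : S.bracket p2 y' = S.bracket p2 (Y 1) := rfl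
        have hw1' : w1 ∈ Submodule.span ℂ (SXI (j+1)) := by
          have hstab := inf_L1_stable S y y' hy hy' hgen (2*j+3) (by omega)
          have h1 : w1 ∈ S.term (2*j+3) ⊓ S.L1 := ⟨hw1.1, hw1.2⟩
          rw [hstab] at h1
          have h2 : w1 ∈ S.term (2*(j+1)+2) ⊓ S.L1 := by
            rw [show 2*(j+1)+2 = 2*j+3+1 from by omega]
            exact h1
          rw [ih (j+1) (by omega)] at h2
          exact h2
        have hOdd : S.bracket p1 y + S.bracket p2 y' + w1 ∈ Submodule.span ℂ (SXI j) := by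
          refine Submodule.add_mem _ (Submodule.add_mem _ ?_ ?_) ?_
          · rw [hm1']; exact hbry p1 hp1 0
          · rw [hm2']; exact hbry p2 hp2 1
          · exact Submodule.span_mono (hSXIsub j) hw1'
        have hOddL1 : S.bracket p1 y + S.bracket p2 y' + w1 ∈ S.L1 := by
          refine Submodule.add_mem _ (Submodule.add_mem _ ?_ ?_) hw1.2
          · exact S.g01 p1 hp1.2 y hy
          · exact S.g01 p2 hp2.2 y' hy'
        have hEvenL0 : S.bracket q1 y + S.bracket q2 y' + w0 ∈ S.L0 := by
          refine Submodule.add_mem _ (Submodule.add_mem _ ?_ ?_) hw0.2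
          · exact S.g11 q1 hq1.2 y hy
          · exact S.g11 q2 hq2.2 y' hy'
        have hdecomp : u = (S.bracket p1 y + S.bracket p2 y' + w1)
            + (S.bracket q1 y + S.bracket q2 y' + w0) := by
          rw [← hsum, ← hsum']
          show (S.R y) (p1 + q1) + (S.R y') (p2 + q2) + (w0 + w1) = _
          have e1 : (S.R y) (p1 + q1) = S.bracket p1 y + S.bracket q1 y := by
            show S.bracket (p1 + q1) y = _
            rw [hbr_add]
          have e2 : (S.R y') (p2 + q2) = S.bracket p2 y' + S.bracket q2 y' := by
            show S.bracket (p2 + q2) y' = _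
            rw [hbr_add]
          rw [e1, e2]
          abel
        have hzero : u - (S.bracket p1 y + S.bracket p2 y' + w1)
            = S.bracket q1 y + S.bracket q2 y' + w0 := by
          rw [hdecomp]; abel
        have hz0 : u - (S.bracket p1 y + S.bracket p2 y' + w1) = 0 := by
          apply S.grade_zero
          · rw [hzero]; exact hEvenL0
          · exact Submodule.sub_mem _ hu1 hOddL1
        have hu_eq : u = S.bracket p1 y + S.bracket p2 y' + w1 := by
          have := sub_eq_zero.mp hz0
          exact this
        rw [hu_eq]
        exact hOdd
    intro j
    rcases le_or_gt (n+m) (2*j+2+(n+m)) with _ | _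
    · exact key (n+m) j (by omega)
    · exact key (n+m) j (by omega)
  -- the two relevant odd layers differ
  have hXine : S.term (2*(m-3)+2) ⊓ S.L1 ≠ S.term (2*(m-2)+2) ⊓ S.L1 := by
    intro heq
    have h1 := hstrict (2*(m-3)+2) (by omega)
    have h2 := heven (2*(m-3)+2) (by omega)
    have h3 := hab (2*(m-3)+2)
    have h4 := hab (2*(m-3)+2+1)
    have h5 := hodd (2*(m-3)+2+1) (by omega)
    have h6 : Module.finrank ℂ ↥(S.term (2*(m-3)+2) ⊓ S.L1)
        = Module.finrank ℂ ↥(S.term (2*(m-3)+2+1+1) ⊓ S.L1) := by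
      rw [show 2*(m-3)+2+1+1 = 2*(m-2)+2 from by omega, heq]
    omega
  -- T^{n+m} = 0 on all of L
  have hTterm : ∀ (v : L) (k : ℕ), (T^k) v ∈ S.term (2*k) := by
    intro v k
    induction k with
    | zero => trivial
    | succ k ih =>
      have h1 : (T^(k+1)) v = S.bracket ((T^k) v) x := by rw [pow_succ']; rfl
      rw [h1]
      exact S.term_le_of_le (by omega)
        (S.bracketSpan_term_term 1 (2*k) (S.bracket_mem_bracketSpan ih hx1))
  have hR1nil : (S.R1 x hx)^(n+m) = 0 := by
    have hres : (S.R1 x hx)^(n+m) = ((S.R x)^(n+m)).restrict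
        (Module.End.pow_apply_mem_of_forall_mem (n+m) (fun z hz => S.g10 z hz x hx)) :=
      Module.End.pow_restrict (n+m) _
    ext v
    rw [hres]
    have hz : (T^(n+m)) (v:L) ∈ S.term (2*(n+m)) := hTterm v (n+m)
    rw [hbot' (2*(n+m)) (by omega)] at hz
    have hz0 : (T^(n+m)) (v:L) = 0 := (Submodule.mem_bot ℂ).mp hz
    simpa using hz0
  -- T^{m-2} kills the odd part
  have hkill : ∀ (v : L), v ∈ S.L1 → (T^(m-2)) v = 0 := by
    have hf : (S.R1 x hx)^(m-2) = 0 := by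
      by_contra hne0
      obtain ⟨ls, hls, hhead⟩ := JordanAux.jordan_exists (S.R1 x hx) hR1nil hne0
      have hlex := hcs.2.2.2 x hx hxnot ls hls
      rcases hlex with rfl | hlex
      · omega
      · cases ms with
        | nil => exact hne rfl
        | cons b tl =>
          cases ls with
          | nil =>
            have h0 : (([] : List ℕ)).headI = 0 := rfl
            rw [h0] at hhead
            omega
          | cons a tl' =>
            have hcases : a < b ∨ (a = b ∧ List.Lex (· < ·) tl' tl) := by
              cases hlex with
              | rel h => exact Or.inl h
              | cons h => exact Or.inr ⟨rfl, h⟩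
            have ha : (m-2)+1 ≤ a := hhead
            have hb : b + 2 ≤ m := hm1
            rcases hcases with h | ⟨h, _⟩ <;> omega
    intro v hv
    have hres : (S.R1 x hx)^(m-2) = ((S.R x)^(m-2)).restrict
        (Module.End.pow_apply_mem_of_forall_mem (m-2) (fun z hz => S.g10 z hz x hx)) :=
      Module.End.pow_restrict (m-2) _
    have h1 : (((S.R1 x hx)^(m-2)) ⟨v, hv⟩ : L) = (T^(m-2)) v := by
      rw [hres]
      rfl
    rw [← h1, hf]
    rfl
  -- pick a generator of the top odd layer outside the deeper layer
  obtain ⟨d, hd⟩ : ∃ d : Fin 2, xi (m-3) d ∉ S.term (2*(m-2)+2) ⊓ S.L1 := by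
    by_contra hall
    push_neg at hall
    apply hXine
    refine le_antisymm ?_ (inf_le_inf_right _ (S.term_le_of_le (by omega)))
    rw [hXi (m-3)]
    apply Submodule.span_le.mpr
    rintro w ⟨s, a, rfl⟩
    rcases Nat.eq_zero_or_pos s with rfl | hs
    · rw [show m-3+0 = m-3 from by omega]
      exact hall a
    · rw [hXi (m-2)]
      apply Submodule.subset_span
      exact ⟨s-1, a, by rw [show m-2+(s-1) = m-3+s from by omega]⟩
  have hsc : ∀ (cc : ℂ) (v : L), cc • v ∈ S.term (2*(m-2)+2) ⊓ S.L1 →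
      v ∉ S.term (2*(m-2)+2) ⊓ S.L1 → cc = 0 := by
    intro cc v hin hnotin
    by_contra hcc
    apply hnotin
    have h : v = cc⁻¹ • (cc • v) := by rw [smul_smul, inv_mul_cancel₀ hcc, one_smul]
    rw [h]
    exact Submodule.smul_mem _ _ hin
  -- deep terms land in the deeper layer
  have hork : (m-3) = 0 ∨ 2 ≤ n := by
    rcases le_or_gt 4 m with h4 | h4
    · exact Or.inr (by omega)
    · exact Or.inl (by omega)
  have hZfate : ∀ (zz : L), zz ∈ Submodule.map T S.L0 → ∀ i : Fin 2,
      (T^(m-3)) (S.bracket zz (Y i)) ∈ S.term (2*(m-2)+2) ⊓ S.L1 := by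
    intro zz hzz i
    have h1 : zz ∈ Submodule.span ℂ (SX 1) := by
      rw [← hMspan 1, pow_one]
      exact hzz
    have hlin : Submodule.span ℂ (SX 1) ≤
        Submodule.comap ((T^(m-3)) ∘ₗ (S.R (Y i))) (S.term (2*(m-2)+2) ⊓ S.L1) := by
      apply Submodule.span_le.mpr
      rintro w ⟨s, rfl⟩
      show (T^(m-3)) (S.bracket (X (1+s)) (Y i)) ∈ S.term (2*(m-2)+2) ⊓ S.L1
      have h2 : S.bracket (X (1+s)) (Y i) = xi (1+s) i := rfl
      rw [h2, hTpowxi (m-3) hork (1+s) i]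
      rw [hXi (m-2)]
      apply Submodule.subset_span
      exact ⟨s, i, by rw [show m-2+s = 1+s+(m-3) from by omega]⟩
    exact hlin h1
  -- the master relation
  have hstst : ∀ a b cI : Fin 2,
      N cI a • xi (m-3) b + N cI b • xi (m-3) a ∈ S.term (2*(m-2)+2) ⊓ S.L1 := by
    intro a b cI
    have hx0b : ∀ e : Fin 2, S.bracket x (Y e) = xi 0 e := fun e => rfl
    have heq1 : N a b • S.bracket (Y cI) x
        = N cI a • xi 0 b + N cI b • xi 0 a
          + S.bracket (Z cI a) (Y b) + S.bracket (Z cI b) (Y a) := by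
      have h := S.leib11 (Y cI) (Y a) (hY1 a) (Y b) (hY1 b)
      rw [hNZ a b, map_add, map_smul, hR0deep _ (hZmem a b) (Y cI), add_zero] at h
      rw [hNZ cI a, hNZ cI b, hbr_add, hbr_add, hbr_smul, hbr_smul, hx0b a, hx0b b] at h
      rw [h]
      abel
    have happ := congrArg (T^(m-3)) heq1
    simp only [map_add, map_smul] at happ
    have hL : (T^(m-3)) (S.bracket (Y cI) x) = 0 := by
      have h1 : (T^(m-3)) (S.bracket (Y cI) x) = (T^(m-2)) (Y cI) := by
        rw [show m-2 = (m-3)+1 from by omega, pow_succ]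
        rfl
      rw [h1]
      exact hkill (Y cI) (hY1 cI)
    rw [hL, smul_zero] at happ
    have hxia : (T^(m-3)) (xi 0 a) = xi (m-3) a := by
      rw [hTpowxi (m-3) hork 0 a, show (0:ℕ)+(m-3) = m-3 from by omega]
    have hxib : (T^(m-3)) (xi 0 b) = xi (m-3) b := by
      rw [hTpowxi (m-3) hork 0 b, show (0:ℕ)+(m-3) = m-3 from by omega]
    rw [hxia, hxib] at happ
    have hgoal : N cI a • xi (m-3) b + N cI b • xi (m-3) a
        = (0:L) - (T^(m-3)) (S.bracket (Z cI a) (Y b)) - (T^(m-3)) (S.bracket (Z cI b) (Y a)) := by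
      rw [happ]
      abel
    rw [hgoal]
    refine Submodule.sub_mem _ (Submodule.sub_mem _ (Submodule.zero_mem _) ?_) ?_
    · exact hZfate _ (hZmem cI a) b
    · exact hZfate _ (hZmem cI b) a
  -- kill N
  have hNcd : ∀ cI : Fin 2, N cI d = 0 := by
    intro cI
    have h := hstst d d cI
    rw [← add_smul] at h
    have h1 := hsc _ _ h hd
    have h2 : (2:ℂ) * N cI d = 0 := by rw [two_mul]; exact h1
    rcases mul_eq_zero.mp h2 with h3 | h3
    · exact absurd h3 two_ne_zero
    · exact h3
  obtain ⟨a0, b0, hab0⟩ := hNne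
  apply hab0
  have h := hstst b0 d a0
  rw [hNcd a0, zero_smul, add_zero] at h
  exact hsc _ _ h hd
end

section
/- Let L be a complex Leibniz superalgebra of nilindex n+m with characteristic sequence C(L) = (n | m₁, …, m_k), equipped with a basis {x₁,…,x_n,y₁,…,y_m} (x_i ∈ L₀, y_j ∈ L₁) satisfying [x_i,x₁]=x_{i+1} for 1 ≤ i ≤ n−1, [y_j,x₁]=y_{j+1} for j ∉ {m₁, m₁+m₂, …, m₁+⋯+m_k}, and [y_j,x₁]=0 for j ∈ {m₁, m₁+m₂, …, m₁+⋯+m_k}, whose generators are x₁ ∈ L₀ and y₁ ∈ L₁, and write [y_j,y₁] = Σ_{s=2}^n β_{j,s} x_s for 1 ≤ j ≤ m. Then for all 1 ≤ i,j ≤ m₁ one has [y_i,y_j] = Σ_{s=0}^{min{i+j−1,m₁}−i} (−1)^s C(j−1,s) Σ_{t=2}^{n−j+s+1} β_{i+s,t} x_{t+j−s−1}, where C(j−1,s) denotes the binomial coefficient. -/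
open LeibnizSuper in
private lemma aux_pow_mem_term {L : Type*} [AddCommGroup L] [Module ℂ L]
    (S : LeibnizSuper L) (w : L) (k : ℕ) (z : L) :
    ((LinearMap.flip S.bracket w) ^ k) z ∈ S.term k := by
  induction k with
  | zero => exact Submodule.mem_top
  | succ k ih =>
    rw [pow_succ']
    simp only [LeibnizSuper.term]
    exact Submodule.subset_span ⟨_, ih, w, Submodule.mem_top, rfl⟩

private lemma aux_headI_le_take_sum (ms : List ℕ) (k : ℕ) :
    ms.headI ≤ (ms.take (k + 1)).sum := by
  cases ms with
  | nil => simp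
  | cons a t => simpa [List.take_succ_cons] using Nat.le_add_right a (t.take k).sum

private lemma aux_take_one_sum (ms : List ℕ) :
    (ms.take 1).sum = ms.headI := by
  cases ms with
  | nil => simp
  | cons a t => simp [List.take_succ_cons]

open LeibnizSuper in
/-- Formula (6): in a Leibniz superalgebra of nilindex `n+m` with characteristic
sequence `(n | m₁, …, m_k)`, basis (5) and generators `x₁, y₁`, writing
`[y_j,y₁] = Σ_{s=2}^n β_{j,s} x_s`, for all `1 ≤ i, j ≤ m₁` one has
`[y_i,y_j] = Σ_{s=0}^{min(i+j−1,m₁)−i} (−1)^s C(j−1,s) Σ_{t=2}^{n−j+s+1} β_{i+s,t} x_{t+j−s−1}`. -/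
theorem bracket_yy_formula_general {L : Type*} [AddCommGroup L] [Module ℂ L]
    [FiniteDimensional ℂ L] (S : LeibnizSuper L) (n : ℕ) (ms : List ℕ)
    (hne : ms ≠ [])
    (hn : Module.finrank ℂ S.L0 = n) (hm : Module.finrank ℂ S.L1 = ms.sum)
    (hcs : S.HasCharSeq [n] ms) (hnil : S.HasNilindex (n + ms.sum))
    (x y : ℕ → L)
    (hx0 : ∀ i, 1 ≤ i → i ≤ n → x i ∈ S.L0)
    (hy1 : ∀ j, 1 ≤ j → j ≤ ms.sum → y j ∈ S.L1)
    (hLI : LinearIndependent ℂ (Sum.elim (fun i : Fin n => x ((i : ℕ) + 1))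
      (fun j : Fin ms.sum => y ((j : ℕ) + 1))))
    (hspan : Submodule.span ℂ (Set.range (Sum.elim (fun i : Fin n => x ((i : ℕ) + 1))
      (fun j : Fin ms.sum => y ((j : ℕ) + 1)))) = ⊤)
    (hxx : ∀ i, 1 ≤ i → i ≤ n - 1 → S.bracket (x i) (x 1) = x (i + 1))
    (hyx : ∀ j, 1 ≤ j → j ≤ ms.sum →
      (¬ ∃ k < ms.length, j = (ms.take (k + 1)).sum) →
      S.bracket (y j) (x 1) = y (j + 1))
    (hyx0 : ∀ j, (∃ k < ms.length, j = (ms.take (k + 1)).sum) →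
      S.bracket (y j) (x 1) = 0)
    (hgen : S.Generates {x 1, y 1})
    (β : ℕ → ℕ → ℂ)
    (hβ : ∀ j, 1 ≤ j → j ≤ ms.sum →
      S.bracket (y j) (y 1) = ∑ s ∈ Finset.Icc 2 n, β j s • x s) :
    ∀ i j, 1 ≤ i → i ≤ ms.headI → 1 ≤ j → j ≤ ms.headI →
      S.bracket (y i) (y j) =
        ∑ s ∈ Finset.range (min (i + j - 1) ms.headI - i + 1),
          ∑ t ∈ Finset.Icc 2 (n + s + 1 - j),
            ((-1 : ℂ) ^ s * (Nat.choose (j - 1) s : ℂ) * β (i + s) t) •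
              x (t + j - s - 1) := by
  classical
  set m1 := ms.headI with hm1def
  have hm1sum : m1 ≤ ms.sum := by
    rw [hm1def]
    cases ms with
    | nil => simp
    | cons a t => simpa using Nat.le_add_right a t.sum
  rcases Nat.eq_zero_or_pos n with hn0 | hnpos
  · subst hn0
    have hL0 : S.L0 = ⊥ := Submodule.finrank_eq_zero.mp hn
    intro i j hi1 hi2 hj1 hj2
    have hyiyj : S.bracket (y i) (y j) = 0 := by
      have hmem : S.bracket (y i) (y j) ∈ S.L0 :=
        S.g11 _ (hy1 i hi1 (hi2.trans hm1sum)) _ (hy1 j hj1 (hj2.trans hm1sum))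
      rw [hL0] at hmem
      simpa using hmem
    rw [hyiyj]
    refine (Finset.sum_eq_zero fun s hs => Finset.sum_eq_zero fun t ht => ?_).symm
    exfalso
    rw [Finset.mem_range] at hs
    rw [Finset.mem_Icc] at ht
    omega
  · have hx1 : x 1 ∈ S.L0 := hx0 1 le_rfl hnpos
    set f : Module.End ℂ L := LinearMap.flip S.bracket (x 1) with hfdef
    have hfapp : ∀ z : L, f z = S.bracket z (x 1) := fun _ => rfl
    -- [x_n, x_1] = 0
    have hxn : S.bracket (x n) (x 1) = 0 := by
      have hmap : ∀ z ∈ S.L0, f z ∈ S.L0 := fun z hz => S.g00 z hz _ hx1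
      have h1 : ((f.restrict hmap) ^ (n + ms.sum - 1)) ⟨x 1, hx1⟩ = 0 := by
        rw [Module.End.pow_restrict]
        have h0 : (f ^ (n + ms.sum - 1)) (x 1) ∈ S.term (n + ms.sum - 1) :=
          aux_pow_mem_term S (x 1) _ (x 1)
        rw [hnil.2.1] at h0
        exact Subtype.ext (by simpa using h0)
      have hker : (⟨x 1, hx1⟩ : S.L0) ∈
          LinearMap.ker ((f.restrict hmap) ^ (Module.finrank ℂ S.L0)) :=
        Module.End.ker_pow_le_ker_pow_finrank (f.restrict hmap) (n + ms.sum - 1)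
          (by rw [LinearMap.mem_ker]; exact h1)
      rw [LinearMap.mem_ker, hn, Module.End.pow_restrict] at hker
      have h3 : (f ^ n) (x 1) = 0 := congrArg Subtype.val hker
      have hiter : ∀ k, k + 1 ≤ n → (f ^ k) (x 1) = x (k + 1) := by
        intro k
        induction k with
        | zero => intro _; simp
        | succ k ih =>
          intro h
          rw [pow_succ', Module.End.mul_apply, ih (by omega), hfapp]
          exact hxx (k + 1) (by omega) (by omega)
      have hn1 : n - 1 + 1 = n := by omega
      calc S.bracket (x n) (x 1) = f (x n) := rfl
        _ = f ((f ^ (n - 1)) (x 1)) := by rw [hiter (n - 1) (by omega), hn1]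
        _ = (f ^ (n - 1 + 1)) (x 1) := by rw [pow_succ', Module.End.mul_apply]
        _ = 0 := by rw [hn1, h3]
    -- step relation for the first block of y's
    have hystep : ∀ r, 1 ≤ r → r < m1 → S.bracket (y r) (x 1) = y (r + 1) := by
      intro r hr1 hr2
      apply hyx r hr1 (by omega)
      rintro ⟨k, hk, hrk⟩
      have := aux_headI_le_take_sum ms k
      omega
    have hytop : S.bracket (y m1) (x 1) = 0 := by
      apply hyx0
      exact ⟨0, by simpa using List.length_pos_iff.mpr hne, (aux_take_one_sum ms).symm⟩
    -- the shift computation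
    have hshift : ∀ (j : ℕ) (c : ℕ → ℂ) (s : ℕ), s + 1 ≤ j →
        f (∑ t ∈ Finset.Icc 2 (n + s + 1 - j), c t • x (t + j - s - 1))
          = ∑ t ∈ Finset.Icc 2 (n + s - j), c t • x (t + j - s) := by
      intro j c s hs
      rw [map_sum]
      simp only [map_smul]
      rcases lt_or_ge (n + s + 1 - j) 2 with h2 | h2
      · rw [Finset.Icc_eq_empty (by omega), Finset.Icc_eq_empty (by omega)]
        simp
      · have he : n + s + 1 - j = (n + s - j) + 1 := by omega
        rw [he, ← Finset.insert_Icc_right_eq_Icc_add_one (by omega : 2 ≤ n + s - j + 1),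
          Finset.sum_insert (by simp)]
        have hidx : n + s - j + 1 + j - s - 1 = n := by omega
        rw [hidx, hfapp, hxn, smul_zero, zero_add]
        refine Finset.sum_congr rfl fun t ht => ?_
        rw [Finset.mem_Icc] at ht
        rw [hfapp, hxx (t + j - s - 1) (by omega) (by omega)]
        congr 2
        omega
    -- main induction on j
    suffices H : ∀ j, 1 ≤ j → j ≤ m1 → ∀ i, 1 ≤ i → i ≤ m1 →
        S.bracket (y i) (y j) =
          ∑ s ∈ Finset.range (min (i + j - 1) m1 - i + 1),
            ∑ t ∈ Finset.Icc 2 (n + s + 1 - j),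
              ((-1 : ℂ) ^ s * (Nat.choose (j - 1) s : ℂ) * β (i + s) t) •
                x (t + j - s - 1) by
      intro i j hi1 hi2 hj1 hj2
      exact H j hj1 hj2 i hi1 hi2
    intro j
    induction j with
    | zero => intro h; exact absurd h (by omega)
    | succ j ihj =>
      intro hj1 hj2 i hi1 hi2
      rcases Nat.eq_zero_or_pos j with rfl | hjpos
      · -- base case j + 1 = 1
        rw [show min (i + (0 + 1) - 1) m1 - i + 1 = 1 from by omega, Finset.sum_range_one]
        have hb := hβ i hi1 (hi2.trans hm1sum)
        simpa using hb
      · -- inductive step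
        have IH := ihj hjpos (by omega)
        have hyi : y i ∈ S.L1 := hy1 i hi1 (by omega)
        have hyj : y j ∈ S.L1 := hy1 j (by omega) (by omega)
        have hleib : S.bracket (y i) (y (j + 1)) =
            S.bracket (S.bracket (y i) (y j)) (x 1) -
              S.bracket (S.bracket (y i) (x 1)) (y j) := by
          rw [← hystep j hjpos (by omega)]
          exact S.leib10 (y i) (y j) hyj (x 1) hx1
        have hT1 : S.bracket (S.bracket (y i) (y j)) (x 1)
            = ∑ s ∈ Finset.range (min (i + j - 1) m1 - i + 1),
                ∑ t ∈ Finset.Icc 2 (n + s - j),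
                  ((-1 : ℂ) ^ s * (Nat.choose (j - 1) s : ℂ) * β (i + s) t) •
                    x (t + j - s) := by
          have : S.bracket (S.bracket (y i) (y j)) (x 1) = f (S.bracket (y i) (y j)) := rfl
          rw [this, IH i hi1 (by omega), map_sum]
          refine Finset.sum_congr rfl fun s hs => ?_
          rw [Finset.mem_range] at hs
          exact hshift j _ s (by omega)
        have hT2 : S.bracket (S.bracket (y i) (x 1)) (y j)
            = ∑ s ∈ Finset.range (min (i + j) m1 - i),
                ∑ t ∈ Finset.Icc 2 (n + s + 1 - j),
                  ((-1 : ℂ) ^ s * (Nat.choose (j - 1) s : ℂ) * β (i + 1 + s) t) •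
                    x (t + j - s - 1) := by
          rcases eq_or_lt_of_le hi2 with hie | hilt
          · have h0 : S.bracket (y i) (x 1) = 0 := by rw [hie]; exact hytop
            rw [h0, map_zero, LinearMap.zero_apply,
              show min (i + j) m1 - i = 0 from by omega]
            simp
          · rw [hystep i hi1 hilt, IH (i + 1) (by omega) (by omega)]
            rw [show min (i + 1 + j - 1) m1 - (i + 1) + 1 = min (i + j) m1 - i from by omega]
        rw [hleib, hT1, hT2]
        rw [show min (i + (j + 1) - 1) m1 - i + 1 = (min (i + j) m1 - i) + 1 from by omega]
        have hRHS : ∀ s ∈ Finset.range (min (i + j) m1 - i + 1),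
            (∑ t ∈ Finset.Icc 2 (n + s + 1 - (j + 1)),
              ((-1 : ℂ) ^ s * (Nat.choose (j + 1 - 1) s : ℂ) * β (i + s) t) •
                x (t + (j + 1) - s - 1))
            = ∑ t ∈ Finset.Icc 2 (n + s - j),
                ((-1 : ℂ) ^ s * (Nat.choose j s : ℂ) * β (i + s) t) • x (t + j - s) := by
          intro s hs
          rw [Finset.mem_range] at hs
          rw [show n + s + 1 - (j + 1) = n + s - j from by omega,
            show j + 1 - 1 = j from by omega]
          refine Finset.sum_congr rfl fun t ht => ?_
          rw [Finset.mem_Icc] at ht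
          rw [show t + (j + 1) - s - 1 = t + j - s from by omega]
        rw [Finset.sum_congr rfl hRHS]
        -- extend the T1 sum from A+1 to B+1 terms
        have hext : (∑ s ∈ Finset.range (min (i + j - 1) m1 - i + 1),
              ∑ t ∈ Finset.Icc 2 (n + s - j),
                ((-1 : ℂ) ^ s * (Nat.choose (j - 1) s : ℂ) * β (i + s) t) • x (t + j - s))
            = ∑ s ∈ Finset.range (min (i + j) m1 - i + 1),
              ∑ t ∈ Finset.Icc 2 (n + s - j),
                ((-1 : ℂ) ^ s * (Nat.choose (j - 1) s : ℂ) * β (i + s) t) • x (t + j - s) := by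
          rcases eq_or_lt_of_le (by omega :
              min (i + j - 1) m1 - i + 1 ≤ min (i + j) m1 - i + 1) with heq | hlt
          · rw [heq]
          · conv_rhs => rw [show min (i + j) m1 - i + 1 = (min (i + j - 1) m1 - i + 1) + 1
                from by omega, Finset.sum_range_succ]
            rw [left_eq_add]
            refine Finset.sum_eq_zero fun t ht => ?_
            rw [Nat.choose_eq_zero_of_lt (by omega)]
            simp
        rw [hext, sub_eq_iff_eq_add]
        rw [Finset.sum_range_succ' _ (min (i + j) m1 - i),
          Finset.sum_range_succ' _ (min (i + j) m1 - i), add_right_comm,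
          ← Finset.sum_add_distrib]
        congr 1
        · refine Finset.sum_congr rfl fun s hs => ?_
          rw [Finset.mem_range] at hs
          -- Pascal identity step
          have hch : Nat.choose j (s + 1) =
              Nat.choose (j - 1) s + Nat.choose (j - 1) (s + 1) := by
            conv_lhs => rw [show j = j - 1 + 1 from by omega]
            exact Nat.choose_succ_succ _ _
          rw [show n + s + 1 - j = n + (s + 1) - j from by omega,
            ← Finset.sum_add_distrib]
          refine Finset.sum_congr rfl fun t ht => ?_
          rw [Finset.mem_Icc] at ht
          rw [show t + j - s - 1 = t + j - (s + 1) from by omega,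
            show i + 1 + s = i + (s + 1) from by omega, ← add_smul]
          congr 1
          rw [hch]
          push_cast
          ring
        · refine Finset.sum_congr rfl fun t ht => ?_
          simp
end
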